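/- arXiv:2511.02095 — 5 statements merged into one kernel-verified Lean document; each statement's English description precedes it below -/
import Mathlib

section
/- Let n ≥ 1, let A₀ be a real n×n matrix and γ ∈ (0,1) with √γ·ρ(A₀) < 1. Let Σ₀ and Σ_w be real n×n matrices and define the second-moment recursion M₀ := Σ₀, M_{k+1} := A₀ M_k A₀ᵀ + Σ_w for k ≥ 0. Then the series Σ := ∑_{k=0}^∞ γᵏ M_k converges and its sum satisfies the discounted Lyapunov equation Σ − γ A₀ Σ A₀ᵀ = Σ₀ + (γ/(1−γ)) Σ_w. -/
open Matrix Filter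

/-- The spectral radius of a real square matrix: the maximum modulus of its
complex eigenvalues, obtained via the complexification of the matrix. -/
noncomputable def specRad {ι : Type*} [Fintype ι] [DecidableEq ι] (A : Matrix ι ι ℝ) : ℝ :=
  (spectralRadius ℂ (A.map Complex.ofReal)).toReal

section Aux

attribute [local instance] Matrix.linftyOpNormedAddCommGroup Matrix.linftyOpNormedRing
  Matrix.linftyOpNormedAlgebra Matrix.linftyOpNormedSpace Matrix.linftyOpIsBoundedSMul

variable {n : ℕ}

lemma aux_entry_le (X : Matrix (Fin n) (Fin n) ℝ) (a b : Fin n) : ‖X a b‖₊ ≤ ‖X‖₊ := by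
  rw [Matrix.linfty_opNNNorm_def]
  exact le_trans (Finset.single_le_sum (f := fun j => ‖X a j‖₊) (fun _ _ => zero_le)
    (Finset.mem_univ b)) (Finset.le_sup (f := fun i => ∑ j, ‖X i j‖₊) (Finset.mem_univ a))

lemma aux_transpose_le (X : Matrix (Fin n) (Fin n) ℝ) : ‖Xᵀ‖ ≤ (n : ℝ) * ‖X‖ := by
  have h : ‖Xᵀ‖₊ ≤ (n : NNReal) * ‖X‖₊ := by
    rw [Matrix.linfty_opNNNorm_def]
    apply Finset.sup_le fun i _ => ?_
    calc ∑ j, ‖Xᵀ i j‖₊ ≤ ∑ _j : Fin n, ‖X‖₊ :=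
          Finset.sum_le_sum fun j _ => by
            simpa [Matrix.transpose_apply] using aux_entry_le X j i
      _ = (n : NNReal) * ‖X‖₊ := by
          simp [Finset.sum_const, Finset.card_univ, mul_comm]
  calc ‖Xᵀ‖ = ((‖Xᵀ‖₊ : NNReal) : ℝ) := rfl
    _ ≤ (((n : NNReal) * ‖X‖₊ : NNReal) : ℝ) := by exact_mod_cast h
    _ = (n : ℝ) * ‖X‖ := by push_cast; rfl

lemma aux_nnnorm_map (X : Matrix (Fin n) (Fin n) ℝ) :
    ‖X.map (Complex.ofReal)‖₊ = ‖X‖₊ := by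
  rw [Matrix.linfty_opNNNorm_def, Matrix.linfty_opNNNorm_def]
  simp [Matrix.map_apply]

lemma aux_map_pow (X : Matrix (Fin n) (Fin n) ℝ) (k : ℕ) :
    (X.map Complex.ofReal) ^ k = (X ^ k).map Complex.ofReal := by
  have h : ∀ Y : Matrix (Fin n) (Fin n) ℝ,
      Y.map Complex.ofReal = Complex.ofRealHom.mapMatrix Y := fun _ => rfl
  rw [h, h, map_pow]

lemma aux_pow_bound (hn : 1 ≤ n) (A : Matrix (Fin n) (Fin n) ℝ) {r : ℝ} (hr : 0 < r)
    (hρ : specRad A < r) : ∃ C : ℝ, 0 < C ∧ ∀ k : ℕ, ‖A ^ k‖ ≤ C * r ^ k := by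
  haveI : Nonempty (Fin n) := Fin.pos_iff_nonempty.mp hn
  set B := A.map Complex.ofReal with hB
  have hfin : spectralRadius ℂ B ≠ ⊤ :=
    ((spectrum.spectralRadius_le_nnnorm (𝕜 := ℂ) B).trans_lt ENNReal.coe_lt_top).ne
  have hlt : spectralRadius ℂ B < ENNReal.ofReal r := by
    rw [ENNReal.lt_ofReal_iff_toReal_lt hfin]; exact hρ
  have htend := spectrum.pow_nnnorm_pow_one_div_tendsto_nhds_spectralRadius B
  obtain ⟨N, hN⟩ := (htend.eventually_lt_const hlt).exists_forall_of_atTop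
  have key : ∀ k : ℕ, N ≤ k → 1 ≤ k → ‖A ^ k‖ ≤ r ^ k := by
    intro k hk hk1
    have h1 := hN k hk
    have hknz : (k : ℝ) ≠ 0 := by positivity
    have h2 : ((‖B ^ k‖₊ : ENNReal) ^ (1 / (k:ℝ))) ^ (k:ℝ)
        < (ENNReal.ofReal r) ^ (k:ℝ) :=
      ENNReal.rpow_lt_rpow h1 (by positivity)
    rw [← ENNReal.rpow_mul, one_div, inv_mul_cancel₀ hknz, ENNReal.rpow_one,
      ENNReal.ofReal_rpow_of_pos hr, Real.rpow_natCast] at h2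
    have h4 : ‖B ^ k‖ < r ^ k := by
      have h3 := ENNReal.toReal_strict_mono (by simp) h2
      rw [ENNReal.coe_toReal, ENNReal.toReal_ofReal (by positivity)] at h3
      exact h3
    have h5 : ‖A ^ k‖ = ‖B ^ k‖ := by
      rw [hB, aux_map_pow]
      exact congrArg NNReal.toReal (aux_nnnorm_map (A ^ k)).symm
    linarith
  have hsum0 : (0:ℝ) ≤ ∑ k ∈ Finset.range (N + 1), ‖A ^ k‖ / r ^ k :=
    Finset.sum_nonneg fun k _ => by positivity
  refine ⟨1 + ∑ k ∈ Finset.range (N + 1), ‖A ^ k‖ / r ^ k, by linarith, fun k => ?_⟩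
  rcases le_or_gt k N with h | h
  · have hle : ‖A ^ k‖ / r ^ k ≤ ∑ i ∈ Finset.range (N + 1), ‖A ^ i‖ / r ^ i :=
      Finset.single_le_sum (f := fun i => ‖A ^ i‖ / r ^ i)
        (fun i _ => by positivity) (Finset.mem_range.mpr (Nat.lt_succ_of_le h))
    calc ‖A ^ k‖ = (‖A ^ k‖ / r ^ k) * r ^ k := by field_simp
      _ ≤ (1 + ∑ i ∈ Finset.range (N + 1), ‖A ^ i‖ / r ^ i) * r ^ k := by
          apply mul_le_mul_of_nonneg_right (by linarith) (by positivity)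
  · have h1 : ‖A ^ k‖ ≤ r ^ k := key k h.le (by omega)
    calc ‖A ^ k‖ ≤ r ^ k := h1
      _ = 1 * r ^ k := (one_mul _).symm
      _ ≤ (1 + ∑ i ∈ Finset.range (N + 1), ‖A ^ i‖ / r ^ i) * r ^ k :=
          mul_le_mul_of_nonneg_right (by linarith) (by positivity)

lemma aux_main (hn : 1 ≤ n) (γ : ℝ) (hγ : γ ∈ Set.Ioo (0 : ℝ) 1)
    (A₀ S0 Sw : Matrix (Fin n) (Fin n) ℝ)
    (hstab : Real.sqrt γ * specRad A₀ < 1)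
    (M : ℕ → Matrix (Fin n) (Fin n) ℝ)
    (hM0 : M 0 = S0) (hMk : ∀ k : ℕ, M (k + 1) = A₀ * M k * A₀ᵀ + Sw) :
    Summable (fun k : ℕ => γ ^ k • M k) ∧
    (∑' k : ℕ, γ ^ k • M k) - γ • (A₀ * (∑' k : ℕ, γ ^ k • M k) * A₀ᵀ)
      = S0 + (γ / (1 - γ)) • Sw := by
  obtain ⟨hγ0, hγ1⟩ := hγ
  have hs0 : 0 < Real.sqrt γ := Real.sqrt_pos.mpr hγ0
  have hsq : Real.sqrt γ ^ 2 = γ := Real.sq_sqrt hγ0.le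
  have hρ0 : 0 ≤ specRad A₀ := ENNReal.toReal_nonneg
  have hρinv : specRad A₀ < 1 / Real.sqrt γ := by
    rw [lt_div_iff₀ hs0]; linarith [mul_comm (specRad A₀) (Real.sqrt γ)]
  obtain ⟨r, hρr, hrinv⟩ : ∃ r : ℝ, specRad A₀ < r ∧ r < 1 / Real.sqrt γ :=
    ⟨(specRad A₀ + 1 / Real.sqrt γ) / 2, by linarith, by linarith⟩
  have hr0 : 0 < r := hρ0.trans_lt hρr
  have hsr : Real.sqrt γ * r < 1 := by
    rw [← lt_div_iff₀' hs0]; exact hrinv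
  have hγr2 : γ * r ^ 2 < 1 := by
    have h1 : (Real.sqrt γ * r) ^ 2 < 1 := by nlinarith [mul_pos hs0 hr0]
    calc γ * r ^ 2 = (Real.sqrt γ * r) ^ 2 := by rw [mul_pow, hsq]
      _ < 1 := h1
  obtain ⟨s, hs1, hr2s, hγs⟩ : ∃ s : ℝ, 1 ≤ s ∧ r ^ 2 ≤ s ∧ γ * s < 1 := by
    refine ⟨max 1 (r ^ 2), le_max_left _ _, le_max_right _ _, ?_⟩
    rcases max_cases 1 (r ^ 2) with ⟨h, _⟩ | ⟨h, _⟩ <;> rw [h] <;> nlinarith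
  have hs0' : 0 < s := lt_of_lt_of_le one_pos hs1
  obtain ⟨C, hC0, hCb⟩ := aux_pow_bound hn A₀ hr0 hρr
  -- closed form for M
  have hform : ∀ k : ℕ, M k = A₀ ^ k * S0 * A₀ᵀ ^ k
      + ∑ j ∈ Finset.range k, A₀ ^ j * Sw * A₀ᵀ ^ j := by
    intro k
    induction k with
    | zero => simp [hM0]
    | succ k ih =>
      have e2 : ∀ (W : Matrix (Fin n) (Fin n) ℝ) (j : ℕ),
          A₀ * (A₀ ^ j * W * A₀ᵀ ^ j) * A₀ᵀ = A₀ ^ (j+1) * W * A₀ᵀ ^ (j+1) := by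
        intro W j
        rw [pow_succ', pow_succ]
        simp only [mul_assoc]
      rw [hMk, ih, Finset.sum_range_succ' (fun j => A₀ ^ j * Sw * A₀ᵀ ^ j) k]
      rw [Matrix.mul_add, Matrix.add_mul, Finset.mul_sum, Finset.sum_mul]
      simp only [e2, pow_zero, one_mul, mul_one]
      rw [add_assoc]
  -- norm bound for each term
  have hterm : ∀ (W : Matrix (Fin n) (Fin n) ℝ) (j k : ℕ), j ≤ k →
      ‖A₀ ^ j * W * A₀ᵀ ^ j‖ ≤ (n : ℝ) * C ^ 2 * ‖W‖ * s ^ k := by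
    intro W j k hjk
    have h1 : ‖A₀ ^ j‖ ≤ C * r ^ j := hCb j
    have h2 : ‖A₀ᵀ ^ j‖ ≤ (n : ℝ) * (C * r ^ j) := by
      rw [← Matrix.transpose_pow]
      exact (aux_transpose_le _).trans
        (mul_le_mul_of_nonneg_left h1 (Nat.cast_nonneg n))
    have h3 : ‖A₀ ^ j * W * A₀ᵀ ^ j‖ ≤ (C * r ^ j) * ‖W‖ * ((n : ℝ) * (C * r ^ j)) := by
      calc ‖A₀ ^ j * W * A₀ᵀ ^ j‖ ≤ ‖A₀ ^ j * W‖ * ‖A₀ᵀ ^ j‖ := norm_mul_le _ _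
        _ ≤ (‖A₀ ^ j‖ * ‖W‖) * ‖A₀ᵀ ^ j‖ :=
            mul_le_mul_of_nonneg_right (norm_mul_le _ _) (norm_nonneg _)
        _ ≤ (C * r ^ j * ‖W‖) * ((n : ℝ) * (C * r ^ j)) := by
            apply mul_le_mul (mul_le_mul_of_nonneg_right h1 (norm_nonneg _)) h2
              (norm_nonneg _) (by positivity)
    have h4 : (C * r ^ j) * ‖W‖ * ((n : ℝ) * (C * r ^ j))
        = (n : ℝ) * C ^ 2 * ‖W‖ * (r ^ 2) ^ j := by ring
    have h5 : (r ^ 2) ^ j ≤ s ^ k :=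
      (pow_le_pow_left₀ (by positivity) hr2s j).trans (pow_le_pow_right₀ hs1 hjk)
    calc ‖A₀ ^ j * W * A₀ᵀ ^ j‖ ≤ (n : ℝ) * C ^ 2 * ‖W‖ * (r ^ 2) ^ j := by
          rw [← h4]; exact h3
      _ ≤ (n : ℝ) * C ^ 2 * ‖W‖ * s ^ k :=
          mul_le_mul_of_nonneg_left h5 (by positivity)
  -- norm bound for M
  obtain ⟨D, hD0, hDS0, hDSw⟩ : ∃ D : ℝ, 0 ≤ D ∧ (n : ℝ) * C ^ 2 * ‖S0‖ ≤ D ∧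
      (n : ℝ) * C ^ 2 * ‖Sw‖ ≤ D := by
    refine ⟨(n : ℝ) * C ^ 2 * (‖S0‖ + ‖Sw‖), by positivity, ?_, ?_⟩ <;>
      · have h1 : (0:ℝ) ≤ (n : ℝ) * C ^ 2 := by positivity
        nlinarith [norm_nonneg S0, norm_nonneg Sw]
  have hb : ∀ k : ℕ, ‖γ ^ k • M k‖ ≤ D * ((k : ℝ) + 1) * (γ * s) ^ k := by
    intro k
    have hMn : ‖M k‖ ≤ D * ((k : ℝ) + 1) * s ^ k := by
      rw [hform k]
      have hA : ‖A₀ ^ k * S0 * A₀ᵀ ^ k‖ ≤ (n : ℝ) * C ^ 2 * ‖S0‖ * s ^ k :=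
        hterm S0 k k le_rfl
      have hBsum : ‖∑ j ∈ Finset.range k, A₀ ^ j * Sw * A₀ᵀ ^ j‖
          ≤ (k : ℝ) * ((n : ℝ) * C ^ 2 * ‖Sw‖ * s ^ k) := by
        calc ‖∑ j ∈ Finset.range k, A₀ ^ j * Sw * A₀ᵀ ^ j‖
            ≤ ∑ j ∈ Finset.range k, ‖A₀ ^ j * Sw * A₀ᵀ ^ j‖ := norm_sum_le _ _
          _ ≤ ∑ j ∈ Finset.range k, (n : ℝ) * C ^ 2 * ‖Sw‖ * s ^ k :=
              Finset.sum_le_sum fun j hj =>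
                hterm Sw j k (Nat.le_of_lt_succ (Nat.lt_succ_of_lt (Finset.mem_range.mp hj)))
          _ = (k : ℝ) * ((n : ℝ) * C ^ 2 * ‖Sw‖ * s ^ k) := by
              rw [Finset.sum_const, Finset.card_range, nsmul_eq_mul]
      have htri := norm_add_le (A₀ ^ k * S0 * A₀ᵀ ^ k)
        (∑ j ∈ Finset.range k, A₀ ^ j * Sw * A₀ᵀ ^ j)
      have hsk : (0:ℝ) ≤ s ^ k := by positivity
      have hk0 : (0:ℝ) ≤ (k:ℝ) := Nat.cast_nonneg k
      nlinarith [mul_le_mul_of_nonneg_right hDS0 hsk,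
        mul_le_mul_of_nonneg_right (mul_le_mul_of_nonneg_left hDSw hk0) hsk]
    have hg : ‖γ ^ k • M k‖ = γ ^ k * ‖M k‖ := by
      rw [norm_smul, Real.norm_eq_abs, abs_pow, abs_of_pos hγ0]
    rw [hg]
    calc γ ^ k * ‖M k‖ ≤ γ ^ k * (D * ((k : ℝ) + 1) * s ^ k) := by
          apply mul_le_mul_of_nonneg_left hMn (by positivity)
      _ = D * ((k : ℝ) + 1) * (γ * s) ^ k := by rw [mul_pow]; ring
  -- the majorant is summable
  have hmaj : Summable (fun k : ℕ => D * ((k : ℝ) + 1) * (γ * s) ^ k) := by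
    have hx : ‖γ * s‖ < 1 := by
      rw [Real.norm_eq_abs, abs_of_pos (by positivity)]; exact hγs
    have h1 : Summable (fun k : ℕ => (k : ℝ) * (γ * s) ^ k) := by
      simpa using summable_pow_mul_geometric_of_norm_lt_one 1 hx
    have h2 : Summable (fun k : ℕ => (γ * s) ^ k) := summable_geometric_of_norm_lt_one hx
    exact ((h1.add h2).mul_left D).congr fun k => by ring
  have hf : Summable (fun k : ℕ => γ ^ k • M k) :=
    Summable.of_norm_bounded hmaj hb
  refine ⟨hf, ?_⟩
  -- the shifted terms
  have hf1 : ∀ k : ℕ, γ ^ (k+1) • M (k+1)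
      = γ • (A₀ * (γ ^ k • M k) * A₀ᵀ) + γ ^ (k+1) • Sw := by
    intro k
    rw [hMk k, smul_add]
    congr 1
    rw [Matrix.mul_smul, Matrix.smul_mul, smul_smul, pow_succ, mul_comm (γ ^ k) γ]
  have hg1 : Summable (fun k : ℕ => γ • (A₀ * (γ ^ k • M k) * A₀ᵀ)) :=
    ((hf.mul_left A₀).mul_right A₀ᵀ).const_smul γ
  have hgeo : Summable (fun k : ℕ => γ ^ (k+1)) := by
    have := (summable_geometric_of_lt_one hγ0.le hγ1).mul_left γ
    exact this.congr fun k => by rw [pow_succ]; ring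
  have hg2 : Summable (fun k : ℕ => γ ^ (k+1) • Sw) := hgeo.smul_const Sw
  have heq : (∑' k : ℕ, γ ^ k • M k)
      = S0 + (γ • (A₀ * (∑' k : ℕ, γ ^ k • M k) * A₀ᵀ) + (γ / (1 - γ)) • Sw) := by
    conv_lhs => rw [Summable.tsum_eq_zero_add hf]
    congr 1
    · rw [pow_zero, one_smul, hM0]
    calc (∑' k : ℕ, γ ^ (k+1) • M (k+1))
        = ∑' k : ℕ, (γ • (A₀ * (γ ^ k • M k) * A₀ᵀ) + γ ^ (k+1) • Sw) :=
          tsum_congr fun k => hf1 k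
      _ = (∑' k : ℕ, γ • (A₀ * (γ ^ k • M k) * A₀ᵀ)) + ∑' k : ℕ, γ ^ (k+1) • Sw :=
          Summable.tsum_add hg1 hg2
      _ = γ • (A₀ * (∑' k : ℕ, γ ^ k • M k) * A₀ᵀ) + (γ / (1 - γ)) • Sw := by
          congr 1
          · rw [Summable.tsum_const_smul _ ((hf.mul_left A₀).mul_right A₀ᵀ),
              Summable.tsum_mul_right _ (hf.mul_left A₀), Summable.tsum_mul_left _ hf]
          · rw [Summable.tsum_smul_const hgeo]
            congr 1
            have h : ∀ k : ℕ, γ ^ (k+1) = γ * γ ^ k := fun k => by rw [pow_succ]; ring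
            rw [tsum_congr h, tsum_mul_left, tsum_geometric_of_lt_one hγ0.le hγ1,
              div_eq_mul_inv]
  nth_rewrite 1 [heq]
  abel
end Aux

/-- For `√γ · ρ(A₀) < 1`, `γ ∈ (0,1)`, and the second-moment recursion
`M₀ = Σ₀`, `M_{k+1} = A₀ M_k A₀ᵀ + Σ_w`, the series `Σ = ∑ γᵏ M_k` converges and satisfies
the discounted Lyapunov equation `Σ − γ A₀ Σ A₀ᵀ = Σ₀ + (γ/(1−γ)) Σ_w`. -/
theorem stmt1 {n : ℕ} (hn : 1 ≤ n) (γ : ℝ) (hγ : γ ∈ Set.Ioo (0 : ℝ) 1)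
    (A₀ S0 Sw : Matrix (Fin n) (Fin n) ℝ)
    (hstab : Real.sqrt γ * specRad A₀ < 1)
    (M : ℕ → Matrix (Fin n) (Fin n) ℝ)
    (hM0 : M 0 = S0) (hMk : ∀ k : ℕ, M (k + 1) = A₀ * M k * A₀ᵀ + Sw) :
    Summable (fun k : ℕ => γ ^ k • M k) ∧
    (∑' k : ℕ, γ ^ k • M k) - γ • (A₀ * (∑' k : ℕ, γ ^ k • M k) * A₀ᵀ)
      = S0 + (γ / (1 - γ)) • Sw := by
  exact aux_main hn γ hγ A₀ S0 Sw hstab M hM0 hMk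
end

section
/- Let n ≥ 1, let A₀ be a real n×n matrix and γ ∈ (0,1) with √γ·ρ(A₀) < 1. Let Σ₀ and Σ_w be real n×n matrices, let M₀ := Σ₀ and M_{k+1} := A₀ M_k A₀ᵀ + Σ_w, let Q' be a symmetric real n×n matrix, and let P be the (unique) solution of the discounted Lyapunov equation P = Q' + γ A₀ᵀ P A₀. Then the series ∑_{k=0}^∞ γᵏ tr(Q' M_k) converges and equals tr(P Σ₀) + (γ/(1−γ)) tr(P Σ_w). In particular, when Σ₀ = s sᵀ for s ∈ ℝⁿ, the sum equals sᵀ P s + (γ/(1−γ)) tr(P Σ_w), i.e., the value function of the discounted LQR value identity V(s) = sᵀ P s + q with q = (γ/(1−γ)) tr(P Σ_w). -/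
open Matrix

attribute [local instance] Matrix.frobeniusSeminormedAddCommGroup
  Matrix.frobeniusNormedAddCommGroup Matrix.frobeniusNormedRing Matrix.frobeniusNormedAlgebra

open Filter Topology in
private lemma geom_bound {n : ℕ} (A : Matrix (Fin n) (Fin n) ℝ) {r : ℝ} (h1r : 1 ≤ r)
    (hρ : specRad A < r) : ∃ C : ℝ, 1 ≤ C ∧ ∀ k : ℕ, ‖A ^ k‖ ≤ C * r ^ k := by
  set B : Matrix (Fin n) (Fin n) ℂ := A.map Complex.ofReal with hB
  have hBk : ∀ k : ℕ, ‖B ^ k‖ = ‖A ^ k‖ := by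
    intro k
    have h1 : B ^ k = (A ^ k).map Complex.ofReal := by
      rw [hB]
      show (Complex.ofRealHom.mapMatrix A) ^ k = Complex.ofRealHom.mapMatrix (A ^ k)
      exact (map_pow _ _ _).symm
    rw [h1]
    exact Matrix.frobenius_norm_map_eq _ _ fun a => Complex.norm_real a
  have hfin : spectralRadius ℂ B ≠ ⊤ := by
    have h := spectrum.spectralRadius_le_pow_nnnorm_pow_one_div ℂ B 0
    simp only [pow_one, Nat.cast_zero, zero_add, div_one, ENNReal.rpow_one] at h
    exact ne_top_of_le_ne_top (ENNReal.mul_ne_top ENNReal.coe_ne_top ENNReal.coe_ne_top) h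
  have hlt : spectralRadius ℂ B < ENNReal.ofReal r :=
    (ENNReal.lt_ofReal_iff_toReal_lt hfin).mpr hρ
  have hev := (spectrum.pow_norm_pow_one_div_tendsto_nhds_spectralRadius B).eventually_lt_const hlt
  obtain ⟨N, hN⟩ := eventually_atTop.mp hev
  set N' := max N 1 with hN'
  have hkey : ∀ k, N' ≤ k → ‖A ^ k‖ < r ^ k := by
    intro k hk
    have hk1 : 1 ≤ k := le_trans (le_max_right N 1) hk
    have h2 := hN k (le_trans (le_max_left N 1) hk)
    have h3 : ‖B ^ k‖ ^ (1 / (k : ℝ)) < r := by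
      have hr0 : 0 ≤ ‖B ^ k‖ ^ (1 / (k : ℝ)) := Real.rpow_nonneg (norm_nonneg _) _
      have := (ENNReal.ofReal_lt_ofReal_iff_of_nonneg hr0).mp h2
      exact this
    have hk0 : (k : ℝ) ≠ 0 := Nat.cast_ne_zero.mpr (by omega)
    have h4 : (‖B ^ k‖ ^ (1 / (k : ℝ))) ^ k < r ^ k :=
      pow_lt_pow_left₀ h3 (Real.rpow_nonneg (norm_nonneg _) _) (by omega)
    rwa [← Real.rpow_natCast (‖B ^ k‖ ^ (1 / (k : ℝ))) k, ← Real.rpow_mul (norm_nonneg _),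
      one_div_mul_cancel hk0, Real.rpow_one, hBk] at h4
  refine ⟨1 + ∑ j ∈ Finset.range N', ‖A ^ j‖, le_add_of_nonneg_right
    (Finset.sum_nonneg fun _ _ => norm_nonneg _), fun k => ?_⟩
  set C := 1 + ∑ j ∈ Finset.range N', ‖A ^ j‖ with hC
  have hC1 : 1 ≤ C := le_add_of_nonneg_right (Finset.sum_nonneg fun _ _ => norm_nonneg _)
  have hrk1 : 1 ≤ r ^ k := one_le_pow₀ h1r
  rcases le_or_gt N' k with hk | hk
  · have := (hkey k hk).le
    calc ‖A ^ k‖ ≤ r ^ k := this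
    _ ≤ C * r ^ k := le_mul_of_one_le_left (by positivity) hC1
  · have h5 : ‖A ^ k‖ ≤ ∑ j ∈ Finset.range N', ‖A ^ j‖ :=
      Finset.single_le_sum (fun j _ => norm_nonneg (A ^ j)) (Finset.mem_range.mpr hk)
    calc ‖A ^ k‖ ≤ C := by rw [hC]; linarith
    _ ≤ C * r ^ k := le_mul_of_one_le_right (by linarith) hrk1

private lemma entry_abs_le {n : ℕ} (X : Matrix (Fin n) (Fin n) ℝ) (i j : Fin n) :
    |X i j| ≤ ‖X‖ := by
  have hnorm : ‖X‖ = Real.sqrt (∑ i, ∑ j, ‖X i j‖ ^ 2) := by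
    rw [Matrix.frobenius_norm_def, Real.sqrt_eq_rpow]
    norm_num
  have h1 : ‖X i j‖ ^ 2 ≤ ∑ i, ∑ j, ‖X i j‖ ^ 2 := by
    calc ‖X i j‖ ^ 2 ≤ ∑ j', ‖X i j'‖ ^ 2 :=
          Finset.single_le_sum (f := fun j' => ‖X i j'‖ ^ 2)
            (fun _ _ => sq_nonneg _) (Finset.mem_univ j)
    _ ≤ _ := Finset.single_le_sum
          (f := fun i' => ∑ j', ‖X i' j'‖ ^ 2)
          (fun _ _ => Finset.sum_nonneg fun _ _ => sq_nonneg _) (Finset.mem_univ i)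
  rw [hnorm]
  exact Real.le_sqrt_of_sq_le (by simpa [Real.norm_eq_abs, sq_abs] using h1)

private lemma trace_abs_le {n : ℕ} (X : Matrix (Fin n) (Fin n) ℝ) :
    |X.trace| ≤ n * ‖X‖ := by
  calc |X.trace| = |∑ i, X i i| := by simp [Matrix.trace, Matrix.diag]
  _ ≤ ∑ i, |X i i| := Finset.abs_sum_le_sum_abs _ _
  _ ≤ ∑ _i : Fin n, ‖X‖ := Finset.sum_le_sum fun i _ => entry_abs_le X i i
  _ = n * ‖X‖ := by simp [Finset.card_univ]

open Filter Topology

set_option maxHeartbeats 1000000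

/-- With `√γ·ρ(A₀) < 1`, second moments `M₀ = Σ₀`,
`M_{k+1} = A₀ M_k A₀ᵀ + Σ_w`, a symmetric `Q'`, and `P` the solution of the discounted
Lyapunov equation `P = Q' + γ A₀ᵀ P A₀`, the series `∑ γᵏ tr(Q' M_k)` converges and equals
`tr(P Σ₀) + (γ/(1−γ)) tr(P Σ_w)`; in particular for `Σ₀ = s sᵀ` it equals
`sᵀ P s + (γ/(1−γ)) tr(P Σ_w)`. -/
theorem stmt3 {n : ℕ} (hn : 1 ≤ n) (γ : ℝ) (hγ : γ ∈ Set.Ioo (0 : ℝ) 1)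
    (A₀ S0 Sw : Matrix (Fin n) (Fin n) ℝ)
    (hstab : Real.sqrt γ * specRad A₀ < 1)
    (M : ℕ → Matrix (Fin n) (Fin n) ℝ)
    (hM0 : M 0 = S0) (hMk : ∀ k : ℕ, M (k + 1) = A₀ * M k * A₀ᵀ + Sw)
    (Q' : Matrix (Fin n) (Fin n) ℝ) (hQ : Q'.IsSymm)
    (P : Matrix (Fin n) (Fin n) ℝ) (hP : P = Q' + γ • (A₀ᵀ * P * A₀)) :
    Summable (fun k : ℕ => γ ^ k * (Q' * M k).trace) ∧
    (∑' k : ℕ, γ ^ k * (Q' * M k).trace)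
      = (P * S0).trace + (γ / (1 - γ)) * (P * Sw).trace ∧
    ∀ s : Fin n → ℝ, S0 = Matrix.vecMulVec s s →
      (∑' k : ℕ, γ ^ k * (Q' * M k).trace)
        = s ⬝ᵥ P.mulVec s + (γ / (1 - γ)) * (P * Sw).trace := by
  obtain ⟨hγ0, hγ1⟩ := hγ
  -- choose r with specRad A₀ ≤ max ρ 1 < r < (√γ)⁻¹, 1 ≤ r, γ * r ^ 2 < 1
  set ρ := specRad A₀ with hρdef
  have hρ0 : 0 ≤ ρ := ENNReal.toReal_nonneg
  have hsγ0 : 0 < Real.sqrt γ := Real.sqrt_pos.mpr hγ0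
  have hsγ1 : Real.sqrt γ < 1 := by
    rw [show (1:ℝ) = Real.sqrt 1 by simp]
    exact Real.sqrt_lt_sqrt hγ0.le hγ1
  have hρub : ρ < (Real.sqrt γ)⁻¹ := by
    have : ρ < 1 / Real.sqrt γ := by
      rw [lt_div_iff₀ hsγ0]; linarith [mul_comm ρ (Real.sqrt γ)]
    simpa [one_div] using this
  have h1ub : (1:ℝ) < (Real.sqrt γ)⁻¹ := (one_lt_inv₀ hsγ0).mpr hsγ1
  set r : ℝ := (max ρ 1 + (Real.sqrt γ)⁻¹) / 2 with hrdef
  have hmaxlt : max ρ 1 < (Real.sqrt γ)⁻¹ := max_lt hρub h1ub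
  have h1r : 1 ≤ r := by
    have := le_max_right ρ 1
    rw [hrdef]; linarith
  have hρr : ρ < r := by
    have := le_max_left ρ 1
    rw [hrdef]; linarith
  have hrub : r < (Real.sqrt γ)⁻¹ := by rw [hrdef]; linarith
  have hr0 : 0 < r := lt_of_lt_of_le one_pos h1r
  have hx1 : γ * r ^ 2 < 1 := by
    have h6 : Real.sqrt γ * r < 1 :=
      (mul_lt_mul_of_pos_left hrub hsγ0).trans_eq (mul_inv_cancel₀ hsγ0.ne')
    nlinarith [Real.sq_sqrt hγ0.le, mul_pos hsγ0 hr0,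
      mul_pos (sub_pos.mpr h6) (by positivity : (0:ℝ) < 1 + Real.sqrt γ * r)]
  have hx0 : 0 ≤ γ * r ^ 2 := by positivity
  -- closed form for M
  have hMform : ∀ k : ℕ, M k = A₀ ^ k * S0 * (A₀ ^ k)ᵀ +
      ∑ j ∈ Finset.range k, A₀ ^ j * Sw * (A₀ ^ j)ᵀ := by
    intro k
    induction k with
    | zero => simp [hM0]
    | succ k ih =>
      rw [hMk, ih, Finset.sum_range_succ']
      simp only [pow_succ', transpose_mul, pow_zero, one_mul, transpose_one, mul_one]
      rw [Matrix.mul_add, Matrix.add_mul, Finset.mul_sum, Finset.sum_mul]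
      simp only [Matrix.mul_assoc]
      abel
  -- geometric norm bound
  obtain ⟨C, hC1, hCb⟩ := geom_bound A₀ h1r hρr
  have hC0 : (0:ℝ) ≤ C := zero_le_one.trans hC1
  set D : ℝ := C ^ 2 * (‖S0‖ + ‖Sw‖) + 1 with hDdef
  have hD1 : 1 ≤ D := le_add_of_nonneg_left (by positivity)
  have hD0 : 0 ≤ D := zero_le_one.trans hD1
  have hterm : ∀ (j : ℕ) (W : Matrix (Fin n) (Fin n) ℝ),
      ‖A₀ ^ j * W * (A₀ ^ j)ᵀ‖ ≤ (C ^ 2 * ‖W‖) * (r ^ 2) ^ j := by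
    intro j W
    have h1 : ‖A₀ ^ j * W * (A₀ ^ j)ᵀ‖ ≤ ‖A₀ ^ j‖ * ‖W‖ * ‖A₀ ^ j‖ := by
      calc ‖A₀ ^ j * W * (A₀ ^ j)ᵀ‖ ≤ ‖A₀ ^ j * W‖ * ‖(A₀ ^ j)ᵀ‖ := norm_mul_le _ _
      _ ≤ ‖A₀ ^ j‖ * ‖W‖ * ‖A₀ ^ j‖ := by
          rw [Matrix.frobenius_norm_transpose]
          exact mul_le_mul_of_nonneg_right (norm_mul_le _ _) (norm_nonneg _)
    have h2 := hCb j
    have h3 : (r ^ 2) ^ j = r ^ j * r ^ j := by rw [← pow_mul, two_mul, pow_add]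
    have h4 : (0:ℝ) ≤ r ^ j := by positivity
    calc ‖A₀ ^ j * W * (A₀ ^ j)ᵀ‖ ≤ ‖A₀ ^ j‖ * ‖W‖ * ‖A₀ ^ j‖ := h1
    _ = ‖W‖ * (‖A₀ ^ j‖ * ‖A₀ ^ j‖) := by ring
    _ ≤ ‖W‖ * ((C * r ^ j) * (C * r ^ j)) :=
        mul_le_mul_of_nonneg_left (mul_le_mul h2 h2 (norm_nonneg _) (by positivity))
          (norm_nonneg W)
    _ = C ^ 2 * ‖W‖ * (r ^ 2) ^ j := by rw [h3]; ring
  have hr2k : ∀ j k : ℕ, j ≤ k → (r ^ 2) ^ j ≤ (r ^ 2) ^ k := fun j k hjk =>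
    pow_le_pow_right₀ (by nlinarith) hjk
  have hMb : ∀ k : ℕ, ‖M k‖ ≤ D * (k + 1) * (r ^ 2) ^ k := by
    intro k
    have hr2k0 : (0:ℝ) ≤ (r ^ 2) ^ k := by positivity
    rw [hMform k]
    calc ‖A₀ ^ k * S0 * (A₀ ^ k)ᵀ + ∑ j ∈ Finset.range k, A₀ ^ j * Sw * (A₀ ^ j)ᵀ‖
        ≤ ‖A₀ ^ k * S0 * (A₀ ^ k)ᵀ‖ + ∑ j ∈ Finset.range k, ‖A₀ ^ j * Sw * (A₀ ^ j)ᵀ‖ :=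
          (norm_add_le _ _).trans (add_le_add le_rfl (norm_sum_le _ _))
    _ ≤ (C ^ 2 * ‖S0‖) * (r ^ 2) ^ k + ∑ j ∈ Finset.range k, (C ^ 2 * ‖Sw‖) * (r ^ 2) ^ k := by
          refine add_le_add (hterm k S0) (Finset.sum_le_sum fun j hj => ?_)
          exact (hterm j Sw).trans (mul_le_mul_of_nonneg_left
            (hr2k j k (Finset.mem_range.mp hj).le) (by positivity))
    _ = (C ^ 2 * ‖S0‖) * (r ^ 2) ^ k + k * ((C ^ 2 * ‖Sw‖) * (r ^ 2) ^ k) := by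
          rw [Finset.sum_const, Finset.card_range, nsmul_eq_mul]
    _ ≤ D * (k + 1) * (r ^ 2) ^ k := by
          have hk0 : (0:ℝ) ≤ (k:ℝ) := Nat.cast_nonneg k
          have hS0 : C ^ 2 * ‖S0‖ ≤ D := by
            rw [hDdef]; nlinarith [norm_nonneg Sw, sq_nonneg C]
          have hSw : C ^ 2 * ‖Sw‖ ≤ D := by
            rw [hDdef]; nlinarith [norm_nonneg S0, sq_nonneg C]
          nlinarith [mul_le_mul_of_nonneg_right hS0 hr2k0,
            mul_le_mul_of_nonneg_right hSw hr2k0,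
            mul_le_mul_of_nonneg_left (mul_le_mul_of_nonneg_right hSw hr2k0) hk0]
  -- key absolute bound
  set x : ℝ := γ * r ^ 2 with hxdef
  have key : ∀ (W : Matrix (Fin n) (Fin n) ℝ) (k : ℕ),
      |γ ^ k * (W * M k).trace| ≤ (n * ‖W‖ * D) * ((k + 1) * x ^ k) := by
    intro W k
    have hγk : (0:ℝ) ≤ γ ^ k := by positivity
    have h1 : |(W * M k).trace| ≤ n * ‖W * M k‖ := trace_abs_le _
    have h2 : ‖W * M k‖ ≤ ‖W‖ * ‖M k‖ := norm_mul_le _ _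
    have h3 := hMb k
    have h4 : |γ ^ k * (W * M k).trace| = γ ^ k * |(W * M k).trace| := by
      rw [abs_mul, abs_of_nonneg hγk]
    rw [h4]
    have h5 : |(W * M k).trace| ≤ n * ‖W‖ * (D * (k + 1) * (r ^ 2) ^ k) := by
      calc |(W * M k).trace| ≤ n * ‖W * M k‖ := h1
      _ ≤ n * (‖W‖ * ‖M k‖) := by
          exact mul_le_mul_of_nonneg_left h2 (Nat.cast_nonneg n)
      _ ≤ n * (‖W‖ * (D * (k + 1) * (r ^ 2) ^ k)) := by
          refine mul_le_mul_of_nonneg_left ?_ (Nat.cast_nonneg n)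
          exact mul_le_mul_of_nonneg_left h3 (norm_nonneg W)
      _ = n * ‖W‖ * (D * (k + 1) * (r ^ 2) ^ k) := by ring
    calc γ ^ k * |(W * M k).trace| ≤ γ ^ k * (n * ‖W‖ * (D * (k + 1) * (r ^ 2) ^ k)) :=
        mul_le_mul_of_nonneg_left h5 hγk
    _ = (n * ‖W‖ * D) * ((k + 1) * (γ ^ k * (r ^ 2) ^ k)) := by ring
    _ = (n * ‖W‖ * D) * ((k + 1) * x ^ k) := by rw [hxdef, mul_pow]
  have hxabs : ‖x‖ < 1 := by rw [Real.norm_eq_abs, abs_of_nonneg hx0]; exact hx1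
  -- summability of the dominating series
  have hg : Summable (fun k : ℕ => ((k:ℝ) + 1) * x ^ k) := by
    have h1 : Summable (fun k : ℕ => (k:ℝ) ^ 1 * x ^ k) :=
      summable_pow_mul_geometric_of_norm_lt_one 1 hxabs
    have h2 : Summable (fun k : ℕ => x ^ k) := summable_geometric_of_norm_lt_one hxabs
    exact (h1.add h2).congr fun k => by ring
  -- summability of the series
  have hsummable : Summable (fun k : ℕ => γ ^ k * (Q' * M k).trace) := by
    refine Summable.of_norm_bounded (g := fun k => (n * ‖Q'‖ * D) * ((k + 1) * x ^ k))
      (hg.mul_left _) fun k => ?_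
    rw [Real.norm_eq_abs]
    exact key Q' k
  -- telescoping
  set a : ℕ → ℝ := fun k => γ ^ k * (P * M k).trace with hadef
  set t : ℝ := (P * Sw).trace with htdef
  have hQ'eq : Q' = P - γ • (A₀ᵀ * P * A₀) := by exact eq_sub_of_add_eq hP.symm
  have hc : ∀ k : ℕ, γ ^ k * (Q' * M k).trace = a k - a (k + 1) + γ ^ (k + 1) * t := by
    intro k
    have htr1 : (Q' * M k).trace = (P * M k).trace - γ * ((A₀ᵀ * P * A₀) * M k).trace := by
      rw [hQ'eq, Matrix.sub_mul, Matrix.smul_mul, trace_sub, trace_smul, smul_eq_mul]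
    have htr2 : (P * M (k + 1)).trace = ((A₀ᵀ * P * A₀) * M k).trace + t := by
      rw [hMk, Matrix.mul_add, trace_add, htdef]
      congr 1
      have h6 : P * (A₀ * M k * A₀ᵀ) = (P * A₀ * M k) * A₀ᵀ := by
        simp only [Matrix.mul_assoc]
      rw [h6, Matrix.trace_mul_comm]
      simp only [Matrix.mul_assoc]
    rw [htr1, hadef]
    simp only
    rw [htr2]
    ring
  -- partial sums
  have hsum_eq : ∀ N : ℕ, ∑ k ∈ Finset.range N, γ ^ k * (Q' * M k).trace
      = (a 0 - a N) + t * (γ * ∑ k ∈ Finset.range N, γ ^ k) := by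
    intro N
    rw [Finset.sum_congr rfl fun k _ => hc k, Finset.sum_add_distrib,
      Finset.sum_range_sub' a N]
    congr 1
    rw [Finset.mul_sum, Finset.mul_sum]
    exact Finset.sum_congr rfl fun k _ => by rw [pow_succ]; ring
  -- a N → 0
  have haz : Tendsto a atTop (𝓝 0) := by
    have h7 : Tendsto (fun k : ℕ => (n * ‖P‖ * D) * (((k:ℝ) + 1) * x ^ k)) atTop (𝓝 0) := by
      have := hg.tendsto_atTop_zero
      simpa using this.const_mul (n * ‖P‖ * D)
    exact squeeze_zero_norm (fun k => by
      rw [Real.norm_eq_abs]; exact key P k) h7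
  -- limit of partial sums
  have hgeo : Tendsto (fun N : ℕ => ∑ k ∈ Finset.range N, γ ^ k) atTop (𝓝 ((1 - γ)⁻¹)) :=
    (hasSum_geometric_of_lt_one hγ0.le hγ1).tendsto_sum_nat
  have hlim : Tendsto (fun N : ℕ => ∑ k ∈ Finset.range N, γ ^ k * (Q' * M k).trace) atTop
      (𝓝 ((a 0 - 0) + t * (γ * (1 - γ)⁻¹))) := by
    rw [show (fun N : ℕ => ∑ k ∈ Finset.range N, γ ^ k * (Q' * M k).trace)
      = fun N => (a 0 - a N) + t * (γ * ∑ k ∈ Finset.range N, γ ^ k) from funext hsum_eq]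
    exact (tendsto_const_nhds.sub haz).add
      (((hgeo.const_mul γ).const_mul t))
  have htsum : (∑' k : ℕ, γ ^ k * (Q' * M k).trace)
      = (P * S0).trace + (γ / (1 - γ)) * (P * Sw).trace := by
    have h8 := tendsto_nhds_unique hsummable.hasSum.tendsto_sum_nat hlim
    rw [h8, hadef]
    simp only [pow_zero, one_mul, hM0]
    rw [htdef]
    ring
  refine ⟨hsummable, htsum, fun s hs => ?_⟩
  rw [htsum, hs]
  congr 1
  -- trace (P * vecMulVec s s) = s ⬝ᵥ P *ᵥ s
  simp only [Matrix.trace, Matrix.diag, Matrix.mul_apply, Matrix.vecMulVec_apply,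
    dotProduct, Matrix.mulVec, Finset.mul_sum]
  exact Finset.sum_congr rfl fun i _ => Finset.sum_congr rfl fun j _ => by ring
end

section
/- Fix n, m ≥ 1, real matrices A (n×n), B (n×m), a symmetric n×n matrix Q, a symmetric m×m matrix R, and γ ∈ (0,1). For K an m×n real matrix define A_K := A − BK, and define P(K) := ∑'_{k} γᵏ (A_Kᵀ)ᵏ (Q + KᵀRK) (A_K)ᵏ (the tsum over k ≥ 0). Let K₀ satisfy √γ·ρ(A_{K₀}) < 1. Then the map K ↦ P(K) is Fréchet differentiable at K₀, and for every direction H (m×n real matrix), the derivative D := DP(K₀)[H] is the unique n×n real matrix satisfying the differential Lyapunov equation D − γ A_{K₀}ᵀ D A_{K₀} = HᵀS + SᵀH, where S := R K₀ − γ Bᵀ P(K₀) A_{K₀}. -/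
open Matrix

attribute [local instance] Matrix.normedAddCommGroup Matrix.normedSpace

/-- The discounted-LQR value matrix `P(K) = ∑ γᵏ ((A−BK)ᵀ)ᵏ (Q + KᵀRK) (A−BK)ᵏ`. -/
noncomputable def Pval {n m : ℕ} (A : Matrix (Fin n) (Fin n) ℝ)
    (B : Matrix (Fin n) (Fin m) ℝ) (Q : Matrix (Fin n) (Fin n) ℝ)
    (R : Matrix (Fin m) (Fin m) ℝ) (γ : ℝ) (K : Matrix (Fin m) (Fin n) ℝ) :
    Matrix (Fin n) (Fin n) ℝ :=
  ∑' k : ℕ, γ ^ k • (((A - B * K)ᵀ) ^ k * (Q + Kᵀ * R * K) * (A - B * K) ^ k)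

open Filter
open scoped ENNReal NNReal

section Gelfand
attribute [local instance] Matrix.linftyOpNormedAddCommGroup Matrix.linftyOpNormedRing
  Matrix.linftyOpNormedAlgebra

lemma gelfand_entry_bound {N : Type*} [Fintype N] [DecidableEq N] [Nonempty N]
    (M : Matrix N N ℂ) {t : ℝ} (ht0 : 0 < t)
    (h : (spectralRadius ℂ M).toReal < t) :
    ∃ C : ℝ, 1 ≤ C ∧ ∀ (k : ℕ) (i j : N), ‖(M ^ k) i j‖ ≤ C * t ^ k := by
  have hfin : spectralRadius ℂ M ≠ ⊤ :=
    ne_top_of_le_ne_top ENNReal.coe_ne_top (spectrum.spectralRadius_le_nnnorm M)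
  have hlt : spectralRadius ℂ M < ENNReal.ofReal t := by
    rwa [ENNReal.lt_ofReal_iff_toReal_lt hfin]
  have htend := spectrum.pow_nnnorm_pow_one_div_tendsto_nhds_spectralRadius M
  have hev : ∀ᶠ k : ℕ in atTop, (‖M ^ k‖₊ : ℝ≥0∞) ^ (1 / (k:ℝ)) < ENNReal.ofReal t :=
    htend.eventually_lt_const hlt
  have hev2 : ∀ᶠ k : ℕ in atTop, ‖M ^ k‖ ≤ t ^ k := by
    filter_upwards [hev, eventually_ge_atTop 1] with k hk hk1
    have hk0 : (0:ℝ) < (k:ℝ) := by exact_mod_cast hk1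
    have h2 := ENNReal.rpow_lt_rpow hk hk0
    rw [← ENNReal.rpow_mul, one_div, inv_mul_cancel₀ (ne_of_gt hk0), ENNReal.rpow_one] at h2
    rw [ENNReal.ofReal_rpow_of_pos ht0, Real.rpow_natCast] at h2
    have h3 : (‖M ^ k‖₊ : ℝ≥0∞) ≤ ENNReal.ofReal (t ^ k) := le_of_lt h2
    rw [← enorm_eq_nnnorm, ← ofReal_norm] at h3
    exact (ENNReal.ofReal_le_ofReal_iff (by positivity)).mp h3
  obtain ⟨K, hK⟩ := hev2.exists_forall_of_atTop
  set C : ℝ := 1 + ∑ k ∈ Finset.range K, ‖M ^ k‖ / t ^ k with hC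
  have hC1 : 1 ≤ C := by
    have : (0:ℝ) ≤ ∑ k ∈ Finset.range K, ‖M ^ k‖ / t ^ k :=
      Finset.sum_nonneg fun k _ => by positivity
    simp [hC]; linarith
  refine ⟨C, hC1, fun k i j => ?_⟩
  have hentry : ‖(M ^ k) i j‖ ≤ ‖M ^ k‖ := by
    rw [linfty_opNorm_def]
    calc ‖(M ^ k) i j‖ = ‖(M ^ k) i j‖ := rfl
    _ ≤ ∑ j', ‖(M ^ k) i j'‖ := Finset.single_le_sum (fun j' _ => norm_nonneg _)
        (Finset.mem_univ j)
    _ ≤ _ := by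
        have := Finset.le_sup (f := fun i => ∑ j', ‖(M ^ k) i j'‖₊) (Finset.mem_univ i)
        have := NNReal.coe_le_coe.mpr this
        simpa [NNReal.coe_sum] using this
  rcases le_or_gt K k with hk | hk
  · calc ‖(M ^ k) i j‖ ≤ ‖M ^ k‖ := hentry
      _ ≤ t ^ k := hK k hk
      _ ≤ C * t ^ k := le_mul_of_one_le_left (by positivity) hC1
  · have hle : ‖M ^ k‖ / t ^ k ≤ C := by
      have hmem : k ∈ Finset.range K := Finset.mem_range.mpr hk
      have := Finset.single_le_sum (f := fun k => ‖M ^ k‖ / t ^ k)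
        (fun k _ => by positivity) hmem
      simp only [hC]; linarith
    calc ‖(M ^ k) i j‖ ≤ ‖M ^ k‖ := hentry
      _ = ‖M ^ k‖ / t ^ k * t ^ k := by field_simp
      _ ≤ C * t ^ k := by gcongr

end Gelfand

namespace Stmt11Inst
variable {E : Type*} [NormedAddCommGroup E] [NormedSpace ℝ E]
theorem clmComplete [CompleteSpace E] : CompleteSpace (E →L[ℝ] E) := inferInstance
theorem clmTower : IsScalarTower ℝ (E →L[ℝ] E) (E →L[ℝ] E) := inferInstance
theorem clmComm : SMulCommClass ℝ (E →L[ℝ] E) (E →L[ℝ] E) := inferInstance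
end Stmt11Inst

noncomputable instance stmt11ClmNormedRing {n : ℕ} :
    NormedRing (Matrix (Fin n) (Fin n) ℝ →L[ℝ] Matrix (Fin n) (Fin n) ℝ) :=
  ContinuousLinearMap.toNormedRing
noncomputable instance stmt11ClmNormedAlgebra {n : ℕ} :
    NormedAlgebra ℝ (Matrix (Fin n) (Fin n) ℝ →L[ℝ] Matrix (Fin n) (Fin n) ℝ) :=
  ContinuousLinearMap.toNormedAlgebra
instance stmt11ClmComplete {n : ℕ} :
    @CompleteSpace (Matrix (Fin n) (Fin n) ℝ →L[ℝ] Matrix (Fin n) (Fin n) ℝ)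
      PseudoMetricSpace.toUniformSpace :=
  Stmt11Inst.clmComplete
instance stmt11ClmTower {n : ℕ} :
    IsScalarTower ℝ (Matrix (Fin n) (Fin n) ℝ →L[ℝ] Matrix (Fin n) (Fin n) ℝ)
      (Matrix (Fin n) (Fin n) ℝ →L[ℝ] Matrix (Fin n) (Fin n) ℝ) :=
  Stmt11Inst.clmTower
instance stmt11ClmComm {n : ℕ} :
    SMulCommClass ℝ (Matrix (Fin n) (Fin n) ℝ →L[ℝ] Matrix (Fin n) (Fin n) ℝ)
      (Matrix (Fin n) (Fin n) ℝ →L[ℝ] Matrix (Fin n) (Fin n) ℝ) :=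
  Stmt11Inst.clmComm
namespace Stmt11Aux

lemma norm_mul_le' {I J K : Type*} [Fintype I] [Fintype J] [Fintype K]
    (X : Matrix I J ℝ) (Y : Matrix J K ℝ) :
    ‖X * Y‖ ≤ (Fintype.card J : ℝ) * ‖X‖ * ‖Y‖ := by
  rw [Matrix.norm_le_iff (by positivity)]
  intro i k
  calc ‖(X * Y) i k‖ = ‖∑ j, X i j * Y j k‖ := by rw [Matrix.mul_apply]
    _ ≤ ∑ j, ‖X i j * Y j k‖ := norm_sum_le _ _
    _ ≤ ∑ _j : J, ‖X‖ * ‖Y‖ := Finset.sum_le_sum fun j _ => by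
        rw [norm_mul]
        exact mul_le_mul (Matrix.norm_entry_le_entrywise_sup_norm X)
          (Matrix.norm_entry_le_entrywise_sup_norm Y) (norm_nonneg _) (norm_nonneg _)
    _ = (Fintype.card J : ℝ) * ‖X‖ * ‖Y‖ := by
        rw [Finset.sum_const]; simp [Finset.card_univ, mul_assoc]

/-- expansion of a perturbed power -/
lemma pow_expand {I : Type*} [Fintype I] [DecidableEq I] (L E : Matrix I I ℝ) (k : ℕ) :
    (L + E) ^ k = L ^ k + ∑ j ∈ Finset.range k, L ^ (k - 1 - j) * E * (L + E) ^ j := by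
  induction k with
  | zero => simp
  | succ k ih =>
    have h0 : (L + E) ^ (k + 1) = L * (L + E) ^ k + E * (L + E) ^ k := by
      rw [pow_succ' (L + E) k, add_mul]
    have h1 : ∀ j ∈ Finset.range k, L * (L ^ (k - 1 - j) * E * (L + E) ^ j)
        = L ^ (k + 1 - 1 - j) * E * (L + E) ^ j := by
      intro j hj
      rw [Finset.mem_range] at hj
      have hh : k + 1 - 1 - j = (k - 1 - j) + 1 := by omega
      rw [hh, pow_succ' L]; simp only [mul_assoc]
    rw [h0, ih, mul_add, Finset.mul_sum, Finset.sum_congr rfl h1, Finset.sum_range_succ,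
      show k + 1 - 1 - k = 0 by omega, pow_zero, one_mul, ← pow_succ' L, ← ih]
    abel


lemma conv_sum_le {r s : ℝ} (hr : 0 ≤ r) (hrs : r < s) (k : ℕ) :
    ∑ j ∈ Finset.range k, r ^ (k - 1 - j) * s ^ j ≤ s ^ k / (s - r) := by
  have hs : 0 < s := lt_of_le_of_lt hr hrs
  have hsr : 0 < s - r := by linarith
  induction k with
  | zero => simp only [Finset.range_zero, Finset.sum_empty, pow_zero]
            positivity
  | succ k ih =>
    rw [Finset.sum_range_succ]
    have h1 : ∀ j ∈ Finset.range k, r ^ (k + 1 - 1 - j) * s ^ j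
        = r * (r ^ (k - 1 - j) * s ^ j) := by
      intro j hj
      rw [Finset.mem_range] at hj
      rw [show k + 1 - 1 - j = (k - 1 - j) + 1 by omega, pow_succ]
      ring
    rw [Finset.sum_congr rfl h1, ← Finset.mul_sum,
      show k + 1 - 1 - k = 0 by omega, pow_zero, one_mul]
    have h2 : r * ∑ j ∈ Finset.range k, r ^ (k - 1 - j) * s ^ j ≤ r * (s ^ k / (s - r)) :=
      mul_le_mul_of_nonneg_left ih hr
    have h3 : r * (s ^ k / (s - r)) + s ^ k = s ^ (k + 1) / (s - r) := by
      field_simp; ring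
    nlinarith [pow_nonneg hs.le k]

lemma pert_bound {I : Type*} [Fintype I] [DecidableEq I]
    {b C₀ r₀ s : ℝ} (L E : Matrix I I ℝ)
    (hb : 0 < b) (hC₀ : 1 ≤ C₀) (hr₀ : 0 < r₀) (hrs : r₀ < s)
    (hL : ∀ k : ℕ, b ^ k * ‖L ^ k‖ ≤ C₀ * r₀ ^ k)
    (hE : 2 * C₀ * ((Fintype.card I : ℝ) ^ 2 * b * ‖E‖) ≤ s - r₀) :
    ∀ k : ℕ, b ^ k * ‖(L + E) ^ k‖ ≤ 2 * C₀ * s ^ k := by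
  set μ : ℝ := (Fintype.card I : ℝ) with hμdef
  have hμ0 : 0 ≤ μ := by positivity
  set ε : ℝ := μ ^ 2 * b * ‖E‖ with hεdef
  have hε0 : 0 ≤ ε := by positivity
  have hs : 0 < s := lt_trans hr₀ hrs
  intro k
  induction k using Nat.strong_induction_on with
  | _ k ih =>
    have hexp := pow_expand L E k
    have hnorm : ‖(L + E) ^ k‖ ≤ ‖L ^ k‖
        + ∑ j ∈ Finset.range k, ‖L ^ (k - 1 - j) * E * (L + E) ^ j‖ := by
      rw [hexp]
      exact (norm_add_le _ _).trans (by gcongr; exact norm_sum_le _ _)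
    have hterm : ∀ j ∈ Finset.range k,
        b ^ k * ‖L ^ (k - 1 - j) * E * (L + E) ^ j‖
          ≤ (C₀ * r₀ ^ (k - 1 - j)) * (ε * (2 * C₀ * s ^ j)) := by
      intro j hj
      rw [Finset.mem_range] at hj
      have hbk : b ^ k = b ^ (k - 1 - j) * b * b ^ j := by
        rw [← pow_succ, ← pow_add]
        congr 1
        omega
      have m1 : ‖L ^ (k - 1 - j) * E * (L + E) ^ j‖
          ≤ μ * ‖L ^ (k - 1 - j)‖ * (μ * ‖E‖ * ‖(L + E) ^ j‖) := by
        calc ‖L ^ (k - 1 - j) * E * (L + E) ^ j‖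
            ≤ μ * ‖L ^ (k - 1 - j)‖ * ‖E * (L + E) ^ j‖ := by
              rw [mul_assoc (L ^ (k - 1 - j))]
              exact norm_mul_le' _ _
          _ ≤ μ * ‖L ^ (k - 1 - j)‖ * (μ * ‖E‖ * ‖(L + E) ^ j‖) := by
              have := norm_mul_le' E ((L + E) ^ j)
              have h0 : 0 ≤ μ * ‖L ^ (k - 1 - j)‖ := by positivity
              exact mul_le_mul_of_nonneg_left this h0
      have hLj := hL (k - 1 - j)
      have hIH := ih j hj
      calc b ^ k * ‖L ^ (k - 1 - j) * E * (L + E) ^ j‖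
          ≤ b ^ k * (μ * ‖L ^ (k - 1 - j)‖ * (μ * ‖E‖ * ‖(L + E) ^ j‖)) := by
            exact mul_le_mul_of_nonneg_left m1 (by positivity)
        _ = (b ^ (k - 1 - j) * ‖L ^ (k - 1 - j)‖) * (ε * (b ^ j * ‖(L + E) ^ j‖)) := by
            rw [hbk, hεdef]; ring
        _ ≤ (C₀ * r₀ ^ (k - 1 - j)) * (ε * (2 * C₀ * s ^ j)) := by
            apply mul_le_mul hLj
            · exact mul_le_mul_of_nonneg_left hIH hε0
            · positivity
            · positivity
    have hsum : ∑ j ∈ Finset.range k, (C₀ * r₀ ^ (k - 1 - j)) * (ε * (2 * C₀ * s ^ j))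
        ≤ 2 * C₀ ^ 2 * ε * (s ^ k / (s - r₀)) := by
      have : ∀ j ∈ Finset.range k, (C₀ * r₀ ^ (k - 1 - j)) * (ε * (2 * C₀ * s ^ j))
          = 2 * C₀ ^ 2 * ε * (r₀ ^ (k - 1 - j) * s ^ j) := by intro j _; ring
      rw [Finset.sum_congr rfl this, ← Finset.mul_sum]
      exact mul_le_mul_of_nonneg_left (conv_sum_le hr₀.le hrs k) (by positivity)
    have hfin : 2 * C₀ ^ 2 * ε * (s ^ k / (s - r₀)) ≤ C₀ * s ^ k := by
      have hsr : 0 < s - r₀ := by linarith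
      rw [mul_div_assoc', div_le_iff₀ hsr]
      have hkey := mul_le_mul_of_nonneg_left hE (by positivity : (0:ℝ) ≤ C₀ * s ^ k)
      nlinarith [pow_nonneg hs.le k]

    calc b ^ k * ‖(L + E) ^ k‖
        ≤ b ^ k * ‖L ^ k‖ + ∑ j ∈ Finset.range k,
            b ^ k * ‖L ^ (k - 1 - j) * E * (L + E) ^ j‖ := by
          rw [← Finset.mul_sum, ← mul_add]
          exact mul_le_mul_of_nonneg_left hnorm (by positivity)
      _ ≤ C₀ * r₀ ^ k + ∑ j ∈ Finset.range k,
            (C₀ * r₀ ^ (k - 1 - j)) * (ε * (2 * C₀ * s ^ j)) := by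
          exact add_le_add (hL k) (Finset.sum_le_sum hterm)
      _ ≤ C₀ * r₀ ^ k + C₀ * s ^ k := by
          exact add_le_add le_rfl (hsum.trans hfin)
      _ ≤ 2 * C₀ * s ^ k := by
          have : r₀ ^ k ≤ s ^ k := pow_le_pow_left₀ hr₀.le hrs.le k
          nlinarith [pow_nonneg hs.le k, pow_nonneg hr₀.le k]

lemma base_bound {n : ℕ} (hn : 1 ≤ n) (L : Matrix (Fin n) (Fin n) ℝ) {b : ℝ} (hb : 0 < b)
    (h : b * specRad L < 1) :
    ∃ C₀ r₀ : ℝ, 1 ≤ C₀ ∧ 0 < r₀ ∧ r₀ < 1 ∧ ∀ k : ℕ, b ^ k * ‖L ^ k‖ ≤ C₀ * r₀ ^ k := by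
  haveI : Nonempty (Fin n) := Fin.pos_iff_nonempty.mp hn
  have hρ0 : 0 ≤ specRad L := ENNReal.toReal_nonneg
  have hρ : specRad L < 1 / b := by
    rw [lt_div_iff₀ hb]; linarith [h]
  set t : ℝ := (specRad L + 1 / b) / 2 with ht_def
  have ht0 : 0 < t := by
    have : 0 < 1 / b := by positivity
    simp only [ht_def]; linarith
  have hρt : specRad L < t := by simp only [ht_def]; linarith
  obtain ⟨C, hC1, hbound⟩ := gelfand_entry_bound (L.map Complex.ofReal) ht0 hρt
  refine ⟨C, b * t, hC1, by positivity, ?_, ?_⟩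
  · have : b * t = (b * specRad L + 1) / 2 := by
      rw [ht_def]; linear_combination (mul_one_div_cancel hb.ne') / 2
    rw [this]; linarith
  · intro k
    have hmap : (L.map Complex.ofReal) ^ k = (L ^ k).map Complex.ofReal := by
      have h1 : ∀ M : Matrix (Fin n) (Fin n) ℝ, M.map Complex.ofReal
          = Complex.ofRealHom.mapMatrix M := fun _ => rfl
      rw [h1, h1, ← map_pow]
    have hLk : ‖L ^ k‖ ≤ C * t ^ k := by
      rw [Matrix.norm_le_iff (by positivity)]
      intro i j
      have := hbound k i j
      rw [hmap] at this
      simpa [Real.norm_eq_abs, Matrix.map_apply] using this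
    calc b ^ k * ‖L ^ k‖ ≤ b ^ k * (C * t ^ k) :=
          mul_le_mul_of_nonneg_left hLk (by positivity)
      _ = C * (b * t) ^ k := by rw [mul_pow]; ring

lemma inverse_eq_tsum {R : Type*} [NormedRing R] [CompleteSpace R] {a : R}
    (h : Summable fun k : ℕ => a ^ k) :
    IsUnit (1 - a) ∧ (1 - a) * (∑' k : ℕ, a ^ k) = 1 ∧ (∑' k : ℕ, a ^ k) * (1 - a) = 1 ∧
      Ring.inverse (1 - a) = ∑' k : ℕ, a ^ k := by
  set s : R := ∑' k : ℕ, a ^ k with hs_def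
  have h1 : a * s = ∑' k : ℕ, a ^ (k + 1) := by
    rw [← (h.hasSum.mul_left a).tsum_eq]
    exact tsum_congr fun k => (pow_succ' a k).symm
  have h1' : s * a = ∑' k : ℕ, a ^ (k + 1) := by
    rw [← (h.hasSum.mul_right a).tsum_eq]
    exact tsum_congr fun k => (pow_succ a k).symm
  have h2 : s = 1 + a * s := by
    rw [h1]
    simpa using h.tsum_eq_zero_add
  have h2' : s = 1 + s * a := by
    rw [h1']
    simpa using h.tsum_eq_zero_add
  have hleft : (1 - a) * s = 1 := by
    rw [sub_mul, one_mul]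
    nth_rewrite 1 [h2]
    abel
  have hright : s * (1 - a) = 1 := by
    rw [mul_sub, mul_one]
    nth_rewrite 1 [h2']
    abel
  have hu : IsUnit (1 - a) := ⟨⟨1 - a, s, hleft, hright⟩, rfl⟩
  refine ⟨hu, hleft, hright, ?_⟩
  have := Ring.inverse_unit ⟨1 - a, s, hleft, hright⟩
  simpa using this

variable {n : ℕ}

/-- The sandwich operator `X ↦ Yᵀ * X * Z` as a continuous linear map. -/
noncomputable def sand (Y Z : Matrix (Fin n) (Fin n) ℝ) :
    Matrix (Fin n) (Fin n) ℝ →L[ℝ] Matrix (Fin n) (Fin n) ℝ :=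
  LinearMap.toContinuousLinearMap
    { toFun := fun X => Yᵀ * X * Z
      map_add' := fun X X' => by
        show Yᵀ * (X + X') * Z = Yᵀ * X * Z + Yᵀ * X' * Z
        rw [Matrix.mul_add, Matrix.add_mul]
      map_smul' := fun c X => by
        simp [Matrix.mul_smul, Matrix.smul_mul] }

@[simp] lemma sand_apply (Y Z X : Matrix (Fin n) (Fin n) ℝ) :
    sand Y Z X = Yᵀ * X * Z := rfl

lemma sand_norm_le (Y Z : Matrix (Fin n) (Fin n) ℝ) :
    ‖sand Y Z‖ ≤ (n : ℝ) ^ 2 * ‖Y‖ * ‖Z‖ := by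
  apply ContinuousLinearMap.opNorm_le_bound _ (by positivity)
  intro X
  erw [sand_apply]
  calc ‖Yᵀ * X * Z‖ ≤ (Fintype.card (Fin n) : ℝ) * ‖Yᵀ * X‖ * ‖Z‖ := norm_mul_le' _ _
    _ ≤ (Fintype.card (Fin n) : ℝ) * ((Fintype.card (Fin n) : ℝ) * ‖Yᵀ‖ * ‖X‖) * ‖Z‖ := by
        have h1 := norm_mul_le' Yᵀ X
        gcongr
    _ = (n : ℝ) ^ 2 * ‖Y‖ * ‖Z‖ * ‖X‖ := by
        rw [Matrix.norm_transpose, Fintype.card_fin]; ring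
    _ ≤ (n : ℝ) ^ 2 * ‖Y‖ * ‖Z‖ * ‖X‖ := le_refl _

lemma sand_add_left (Y Y' Z : Matrix (Fin n) (Fin n) ℝ) :
    sand (Y + Y') Z = sand Y Z + sand Y' Z := by
  ext X
  simp [Matrix.transpose_add, Matrix.add_mul]

lemma sand_add_right (Y Z Z' : Matrix (Fin n) (Fin n) ℝ) :
    sand Y (Z + Z') = sand Y Z + sand Y Z' := by
  ext X
  simp [Matrix.mul_add]

lemma sand_sub_left (Y Y' Z : Matrix (Fin n) (Fin n) ℝ) :
    sand (Y - Y') Z = sand Y Z - sand Y' Z := by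
  ext X
  simp [Matrix.transpose_sub, Matrix.sub_mul]

lemma sand_sub_right (Y Z Z' : Matrix (Fin n) (Fin n) ℝ) :
    sand Y (Z - Z') = sand Y Z - sand Y Z' := by
  ext X
  simp [Matrix.mul_sub]

lemma sand_smul_left (c : ℝ) (Y Z : Matrix (Fin n) (Fin n) ℝ) :
    sand (c • Y) Z = c • sand Y Z := by
  ext X
  simp [Matrix.transpose_smul, Matrix.smul_mul]

lemma sand_smul_right (c : ℝ) (Y Z : Matrix (Fin n) (Fin n) ℝ) :
    sand Y (c • Z) = c • sand Y Z := by
  ext X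
  simp [Matrix.mul_smul]

end Stmt11Aux

set_option maxHeartbeats 1000000 in
/-- If `√γ·ρ(A − BK₀) < 1`, then `K ↦ P(K)` is Fréchet differentiable at
`K₀`, and for every direction `H` the derivative `D[H]` is the unique matrix satisfying the
differential Lyapunov equation `D − γ A_{K₀}ᵀ D A_{K₀} = HᵀS + SᵀH`, where
`S = R K₀ − γ Bᵀ P(K₀) A_{K₀}` and `A_{K₀} = A − B K₀`. -/
theorem stmt11 {n m : ℕ} (hn : 1 ≤ n) (hm : 1 ≤ m)
    (A : Matrix (Fin n) (Fin n) ℝ) (B : Matrix (Fin n) (Fin m) ℝ)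
    (Q : Matrix (Fin n) (Fin n) ℝ) (hQ : Q.IsSymm)
    (R : Matrix (Fin m) (Fin m) ℝ) (hR : R.IsSymm)
    (γ : ℝ) (hγ : γ ∈ Set.Ioo (0 : ℝ) 1)
    (K₀ : Matrix (Fin m) (Fin n) ℝ)
    (hstab : Real.sqrt γ * specRad (A - B * K₀) < 1) :
    ∃ D : Matrix (Fin m) (Fin n) ℝ →L[ℝ] Matrix (Fin n) (Fin n) ℝ,
      HasFDerivAt (Pval A B Q R γ) D K₀ ∧
      ∀ H : Matrix (Fin m) (Fin n) ℝ,
        (D H - γ • ((A - B * K₀)ᵀ * D H * (A - B * K₀))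
            = Hᵀ * (R * K₀ - γ • (Bᵀ * Pval A B Q R γ K₀ * (A - B * K₀)))
              + (R * K₀ - γ • (Bᵀ * Pval A B Q R γ K₀ * (A - B * K₀)))ᵀ * H) ∧
        ∀ X : Matrix (Fin n) (Fin n) ℝ,
          X - γ • ((A - B * K₀)ᵀ * X * (A - B * K₀))
              = Hᵀ * (R * K₀ - γ • (Bᵀ * Pval A B Q R γ K₀ * (A - B * K₀)))
                + (R * K₀ - γ • (Bᵀ * Pval A B Q R γ K₀ * (A - B * K₀)))ᵀ * H →
            X = D H := by
  classical
  obtain ⟨hγ0, hγ1⟩ := hγ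
  haveI : Nonempty (Fin n) := Fin.pos_iff_nonempty.mp hn
  set L : Matrix (Fin n) (Fin n) ℝ := A - B * K₀ with hL_def
  set b : ℝ := Real.sqrt γ with hb_def
  have hb : 0 < b := Real.sqrt_pos.mpr hγ0
  have hb2 : b ^ 2 = γ := Real.sq_sqrt hγ0.le
  obtain ⟨C₀, r₀, hC₀, hr₀, hr₀1, hLbound⟩ := Stmt11Aux.base_bound hn L hb hstab
  set s : ℝ := (1 + r₀) / 2 with hs_def
  have hr₀s : r₀ < s := by rw [hs_def]; linarith
  have hs1 : s < 1 := by rw [hs_def]; linarith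
  have hs0 : 0 < s := lt_trans hr₀ hr₀s
  have hs2 : s ^ 2 < 1 := by nlinarith
  -- the radius of the good ball
  set δ : ℝ := (s - r₀) / (2 * C₀ * ((n : ℝ) ^ 2 * b)) / ((m : ℝ) * ‖B‖ + 1) with hδ_def
  have hδ0 : 0 < δ := by
    have h1 : (0:ℝ) < (n:ℝ) := by exact_mod_cast hn
    have h2 : (0:ℝ) ≤ (m:ℝ) * ‖B‖ := by positivity
    have : (0:ℝ) < s - r₀ := by linarith
    apply div_pos (div_pos this (by positivity)) (by linarith)
  -- uniform geometric bound on powers near K₀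
  have hKbound : ∀ K : Matrix (Fin m) (Fin n) ℝ, ‖K - K₀‖ < δ →
      ∀ k : ℕ, b ^ k * ‖(A - B * K) ^ k‖ ≤ 2 * C₀ * s ^ k := by
    intro K hK
    have hn0 : (0:ℝ) < (n:ℝ) := by exact_mod_cast hn
    have hmB : (0:ℝ) < (m:ℝ) * ‖B‖ + 1 := by positivity
    have hEeq : A - B * K = L + B * (K₀ - K) := by
      rw [hL_def, Matrix.mul_sub]
      abel
    have hnB : ‖B * (K₀ - K)‖ ≤ ((m:ℝ) * ‖B‖ + 1) * ‖K - K₀‖ := by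
      calc ‖B * (K₀ - K)‖ ≤ (Fintype.card (Fin m) : ℝ) * ‖B‖ * ‖K₀ - K‖ :=
            Stmt11Aux.norm_mul_le' B (K₀ - K)
        _ = (m:ℝ) * ‖B‖ * ‖K - K₀‖ := by rw [Fintype.card_fin, norm_sub_rev]
        _ ≤ ((m:ℝ) * ‖B‖ + 1) * ‖K - K₀‖ := by
            have := norm_nonneg (K - K₀); nlinarith
    have hEδ : ‖B * (K₀ - K)‖ ≤ ((m:ℝ) * ‖B‖ + 1) * δ :=
      le_trans hnB (mul_le_mul_of_nonneg_left hK.le hmB.le)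
    have hprod : ((m:ℝ) * ‖B‖ + 1) * δ = (s - r₀) / (2 * C₀ * ((n : ℝ) ^ 2 * b)) := by
      rw [hδ_def, mul_div_cancel₀ _ (ne_of_gt hmB)]
    have hE : 2 * C₀ * ((Fintype.card (Fin n) : ℝ) ^ 2 * b * ‖B * (K₀ - K)‖) ≤ s - r₀ := by
      rw [Fintype.card_fin]
      have hden : (0:ℝ) < 2 * C₀ * ((n : ℝ) ^ 2 * b) := by positivity
      have h2 : ‖B * (K₀ - K)‖ ≤ (s - r₀) / (2 * C₀ * ((n : ℝ) ^ 2 * b)) := by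
        rw [← hprod]; exact hEδ
      calc 2 * C₀ * ((n : ℝ) ^ 2 * b * ‖B * (K₀ - K)‖)
          ≤ 2 * C₀ * ((n : ℝ) ^ 2 * b * ((s - r₀) / (2 * C₀ * ((n : ℝ) ^ 2 * b)))) := by
            gcongr
        _ = s - r₀ := by field_simp
    rw [hEeq]
    exact Stmt11Aux.pert_bound L (B * (K₀ - K)) hb hC₀ hr₀ hr₀s hLbound hE
  -- the Lyapunov operator
  set Tm : Matrix (Fin m) (Fin n) ℝ →
      (Matrix (Fin n) (Fin n) ℝ →L[ℝ] Matrix (Fin n) (Fin n) ℝ) :=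
    fun K => γ • Stmt11Aux.sand (A - B * K) (A - B * K) with hTm_def
  set MK : Matrix (Fin m) (Fin n) ℝ → Matrix (Fin n) (Fin n) ℝ :=
    fun K => Q + Kᵀ * R * K with hMK_def
  have hTpow : ∀ (K : Matrix (Fin m) (Fin n) ℝ) (k : ℕ) (X : Matrix (Fin n) (Fin n) ℝ),
      ((Tm K) ^ k) X = γ ^ k • (((A - B * K)ᵀ) ^ k * X * (A - B * K) ^ k) := by
    intro K k X
    induction k with
    | zero => simp
    | succ k ih =>
      rw [pow_succ' (Tm K) k, ContinuousLinearMap.mul_apply, ih, hTm_def]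
      simp only [ContinuousLinearMap.smul_apply, Stmt11Aux.sand_apply]
      rw [Matrix.mul_smul, Matrix.smul_mul, smul_smul, ← pow_succ' γ k,
        pow_succ' ((A - B * K)ᵀ) k, pow_succ (A - B * K) k]
      congr 1
      simp only [Matrix.mul_assoc]
  have hTnorm : ∀ K : Matrix (Fin m) (Fin n) ℝ, ‖K - K₀‖ < δ → ∀ k : ℕ,
      ‖(Tm K) ^ k‖ ≤ (n : ℝ) ^ 2 * (2 * C₀) ^ 2 * (s ^ 2) ^ k := by
    intro K hK k
    have hpows := hKbound K hK k
    apply ContinuousLinearMap.opNorm_le_bound _ (by positivity)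
    intro X
    erw [hTpow K k X]
    set W : Matrix (Fin n) (Fin n) ℝ := A - B * K with hW_def
    have c1 := Stmt11Aux.norm_mul_le' ((Wᵀ) ^ k * X) (W ^ k)
    have c2 := Stmt11Aux.norm_mul_le' ((Wᵀ) ^ k) X
    rw [Fintype.card_fin] at c1 c2
    have c3 : ‖(Wᵀ) ^ k‖ = ‖W ^ k‖ := by
      rw [← Matrix.transpose_pow, Matrix.norm_transpose]
    rw [c3] at c2
    have hmain : ‖(Wᵀ) ^ k * X * W ^ k‖ ≤ (n:ℝ) ^ 2 * ‖W ^ k‖ ^ 2 * ‖X‖ := by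
      calc ‖(Wᵀ) ^ k * X * W ^ k‖ ≤ (n:ℝ) * ‖(Wᵀ) ^ k * X‖ * ‖W ^ k‖ := c1
        _ ≤ (n:ℝ) * ((n:ℝ) * ‖W ^ k‖ * ‖X‖) * ‖W ^ k‖ := by gcongr
        _ = (n:ℝ) ^ 2 * ‖W ^ k‖ ^ 2 * ‖X‖ := by ring
    have hsq : (b ^ k * ‖W ^ k‖) ^ 2 ≤ (2 * C₀ * s ^ k) ^ 2 :=
      pow_le_pow_left₀ (by positivity) hpows 2
    calc ‖γ ^ k • ((Wᵀ) ^ k * X * W ^ k)‖ = γ ^ k * ‖(Wᵀ) ^ k * X * W ^ k‖ := by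
          rw [norm_smul, Real.norm_eq_abs, abs_of_nonneg (by positivity)]
      _ ≤ γ ^ k * ((n:ℝ) ^ 2 * ‖W ^ k‖ ^ 2 * ‖X‖) :=
          mul_le_mul_of_nonneg_left hmain (by positivity)
      _ = (n:ℝ) ^ 2 * (b ^ k * ‖W ^ k‖) ^ 2 * ‖X‖ := by rw [← hb2]; ring
      _ ≤ (n:ℝ) ^ 2 * (2 * C₀ * s ^ k) ^ 2 * ‖X‖ := by gcongr
      _ = (n:ℝ) ^ 2 * (2 * C₀) ^ 2 * (s ^ 2) ^ k * ‖X‖ := by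
          rw [show (s ^ 2) ^ k = (s ^ k) ^ 2 by rw [← pow_mul, ← pow_mul, mul_comm]]
          ring
  have hgeom : Summable fun k : ℕ => (n : ℝ) ^ 2 * (2 * C₀) ^ 2 * (s ^ 2) ^ k :=
    (summable_geometric_of_lt_one (by positivity) hs2).mul_left _
  have hTsum : ∀ K : Matrix (Fin m) (Fin n) ℝ, ‖K - K₀‖ < δ →
      Summable fun k : ℕ => (Tm K) ^ k := by
    intro K hK
    exact Summable.of_norm_bounded hgeom (hTnorm K hK)
  have hMsum : ∀ K : Matrix (Fin m) (Fin n) ℝ, ‖K - K₀‖ < δ →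
      Summable fun k : ℕ => ((Tm K) ^ k) (MK K) := by
    intro K hK
    apply Summable.of_norm_bounded (hgeom.mul_right ‖MK K‖)
    intro k
    calc ‖((Tm K) ^ k) (MK K)‖ ≤ ‖(Tm K) ^ k‖ * ‖MK K‖ :=
          ContinuousLinearMap.le_opNorm _ _
      _ ≤ (n : ℝ) ^ 2 * (2 * C₀) ^ 2 * (s ^ 2) ^ k * ‖MK K‖ := by
          exact mul_le_mul_of_nonneg_right (hTnorm K hK k) (norm_nonneg _)
  have hPvalK : ∀ K : Matrix (Fin m) (Fin n) ℝ,
      Pval A B Q R γ K = ∑' k : ℕ, ((Tm K) ^ k) (MK K) := by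
    intro K
    exact tsum_congr fun k => (hTpow K k (MK K)).symm
  -- the series representation via Ring.inverse
  have hRingInv : ∀ K : Matrix (Fin m) (Fin n) ℝ, ‖K - K₀‖ < δ →
      Pval A B Q R γ K = Ring.inverse (1 - Tm K) (MK K) := by
    intro K hK
    obtain ⟨hu, -, -, hinv⟩ := Stmt11Aux.inverse_eq_tsum (hTsum K hK)
    rw [hPvalK K]; erw [hinv]
    exact (ContinuousLinearMap.map_tsum
      ((ContinuousLinearMap.apply ℝ (Matrix (Fin n) (Fin n) ℝ)) (MK K))
      (hTsum K hK)).symm ▸ rfl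
  -- the fixed point identity
  have hFix : ∀ K : Matrix (Fin m) (Fin n) ℝ, ‖K - K₀‖ < δ →
      Pval A B Q R γ K = MK K + (Tm K) (Pval A B Q R γ K) := by
    intro K hK
    have hsum := hMsum K hK
    rw [hPvalK K]
    conv_lhs => rw [hsum.tsum_eq_zero_add]
    simp only [pow_zero, ContinuousLinearMap.one_apply]
    congr 1
    rw [ContinuousLinearMap.map_tsum (Tm K) hsum]
    exact tsum_congr fun k => by rw [pow_succ', ContinuousLinearMap.mul_apply]
  -- derivative of Tm
  obtain ⟨τ', hτ'⟩ : ∃ τ' : Matrix (Fin m) (Fin n) ℝ →L[ℝ]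
      (Matrix (Fin n) (Fin n) ℝ →L[ℝ] Matrix (Fin n) (Fin n) ℝ),
      ∀ H, τ' H = (-γ) • (Stmt11Aux.sand (B * H) L + Stmt11Aux.sand L (B * H)) := by
    refine ⟨LinearMap.toContinuousLinearMap
      { toFun := fun H => (-γ) • (Stmt11Aux.sand (B * H) L + Stmt11Aux.sand L (B * H))
        map_add' := ?_
        map_smul' := ?_ }, fun H => rfl⟩
    · intro H H'
      simp only [Matrix.mul_add, Stmt11Aux.sand_add_left, Stmt11Aux.sand_add_right, smul_add]
      abel
    · intro c H
      simp only [Matrix.mul_smul, Stmt11Aux.sand_smul_left, Stmt11Aux.sand_smul_right,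
        RingHom.id_apply, ← smul_add]
      rw [smul_comm]
  have hT : HasFDerivAt Tm τ' K₀ := by
    erw [hasFDerivAt_iff_isLittleO_nhds_zero]
    have heq : ∀ Δ : Matrix (Fin m) (Fin n) ℝ,
        Tm (K₀ + Δ) - Tm K₀ - τ' Δ = γ • Stmt11Aux.sand (B * Δ) (B * Δ) := by
      intro Δ
      have hA : A - B * (K₀ + Δ) = L - B * Δ := by
        rw [hL_def, Matrix.mul_add]; abel
      rw [hτ' Δ]
      simp only [hTm_def]
      rw [hA, ← hL_def]
      simp only [Stmt11Aux.sand_sub_left, Stmt11Aux.sand_sub_right, smul_sub, smul_add,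
        neg_smul]
      abel
    have hbig : (fun Δ : Matrix (Fin m) (Fin n) ℝ => γ • Stmt11Aux.sand (B * Δ) (B * Δ))
        =O[nhds 0] (fun Δ => ‖Δ‖ ^ 2) := by
      apply Asymptotics.IsBigO.of_bound (γ * ((n:ℝ) ^ 2 * ((m:ℝ) * ‖B‖) ^ 2))
      filter_upwards with Δ
      have h1 := Stmt11Aux.sand_norm_le (B * Δ) (B * Δ)
      have h2 : ‖B * Δ‖ ≤ (m:ℝ) * ‖B‖ * ‖Δ‖ := by
        have := Stmt11Aux.norm_mul_le' B Δ
        rwa [Fintype.card_fin] at this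
      have hns : ‖γ • Stmt11Aux.sand (B * Δ) (B * Δ)‖ ≤ γ * ‖Stmt11Aux.sand (B * Δ) (B * Δ)‖ := by
        have := ContinuousLinearMap.opNorm_smul_le γ (Stmt11Aux.sand (B * Δ) (B * Δ))
        rwa [Real.norm_eq_abs, abs_of_nonneg hγ0.le] at this
      rw [Real.norm_eq_abs (‖Δ‖ ^ 2), abs_of_nonneg (by positivity : (0:ℝ) ≤ ‖Δ‖ ^ 2)]
      calc ‖γ • Stmt11Aux.sand (B * Δ) (B * Δ)‖
          ≤ γ * ‖Stmt11Aux.sand (B * Δ) (B * Δ)‖ := hns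
        _ ≤ γ * ((n:ℝ) ^ 2 * ‖B * Δ‖ * ‖B * Δ‖) :=
            mul_le_mul_of_nonneg_left h1 hγ0.le
        _ ≤ γ * ((n:ℝ) ^ 2 * ((m:ℝ) * ‖B‖ * ‖Δ‖) * ((m:ℝ) * ‖B‖ * ‖Δ‖)) := by gcongr
        _ = γ * ((n:ℝ) ^ 2 * ((m:ℝ) * ‖B‖) ^ 2) * ‖Δ‖ ^ 2 := by ring
    exact (hbig.trans_isLittleO (Asymptotics.isLittleO_norm_pow_id one_lt_two)).congr_left
      (fun Δ => (heq Δ).symm)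
  -- derivative of MK
  obtain ⟨μ', hμ'⟩ : ∃ μ' : Matrix (Fin m) (Fin n) ℝ →L[ℝ] Matrix (Fin n) (Fin n) ℝ,
      ∀ H, μ' H = Hᵀ * R * K₀ + K₀ᵀ * R * H := by
    refine ⟨LinearMap.toContinuousLinearMap
      { toFun := fun H => Hᵀ * R * K₀ + K₀ᵀ * R * H
        map_add' := ?_
        map_smul' := ?_ }, fun H => rfl⟩
    · intro H H'
      simp only [Matrix.transpose_add, Matrix.add_mul, Matrix.mul_add]
      abel
    · intro c H
      simp only [Matrix.transpose_smul, Matrix.smul_mul, Matrix.mul_smul,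
        RingHom.id_apply, smul_add]
  have hM : HasFDerivAt MK μ' K₀ := by
    erw [hasFDerivAt_iff_isLittleO_nhds_zero]
    have heq : ∀ Δ : Matrix (Fin m) (Fin n) ℝ,
        MK (K₀ + Δ) - MK K₀ - μ' Δ = Δᵀ * R * Δ := by
      intro Δ
      rw [hμ' Δ]
      simp only [hMK_def]
      simp only [Matrix.transpose_add, Matrix.add_mul, Matrix.mul_add]
      abel
    have hbig : (fun Δ : Matrix (Fin m) (Fin n) ℝ => Δᵀ * R * Δ)
        =O[nhds 0] (fun Δ => ‖Δ‖ ^ 2) := by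
      apply Asymptotics.IsBigO.of_bound ((m:ℝ) ^ 2 * ‖R‖)
      filter_upwards with Δ
      have c1 := Stmt11Aux.norm_mul_le' (Δᵀ * R) Δ
      have c2 := Stmt11Aux.norm_mul_le' (Δᵀ) R
      rw [Fintype.card_fin] at c1 c2
      rw [Matrix.norm_transpose] at c2
      rw [Real.norm_eq_abs (‖Δ‖ ^ 2), abs_of_nonneg (by positivity : (0:ℝ) ≤ ‖Δ‖ ^ 2)]
      have c3 := mul_le_mul_of_nonneg_right
        (mul_le_mul_of_nonneg_left c2 (by positivity : (0:ℝ) ≤ (m:ℝ))) (norm_nonneg Δ)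
      nlinarith [norm_nonneg (Δᵀ * R), norm_nonneg Δ, norm_nonneg R]
    exact (hbig.trans_isLittleO (Asymptotics.isLittleO_norm_pow_id one_lt_two)).congr_left
      (fun Δ => (heq Δ).symm)
  -- assemble the derivative
  have hK₀ball : ‖K₀ - K₀‖ < δ := by simpa using hδ0
  have hu0 : IsUnit ((1 : Matrix (Fin n) (Fin n) ℝ →L[ℝ] Matrix (Fin n) (Fin n) ℝ)
      - Tm K₀) := (Stmt11Aux.inverse_eq_tsum (hTsum K₀ hK₀ball)).1
  have husub : HasFDerivAt (fun K => 1 - Tm K) (-τ') K₀ := hT.const_sub 1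
  have Hinv := hasFDerivAt_ringInverse (𝕜 := ℝ) hu0.unit
  rw [hu0.unit_spec] at Hinv
  have hg := Hinv.comp K₀ husub
  have hf : HasFDerivAt (fun K => (Ring.inverse (1 - Tm K)) (MK K)) _ K₀ := hg.clm_apply hM
  have hball : Metric.ball K₀ δ ∈ nhds K₀ := Metric.ball_mem_nhds K₀ hδ0
  have hmem : ∀ K ∈ Metric.ball K₀ δ, ‖K - K₀‖ < δ := by
    intro K hKm
    rwa [Metric.mem_ball, dist_eq_norm] at hKm
  have hev : Pval A B Q R γ =ᶠ[nhds K₀] (fun K => (Ring.inverse (1 - Tm K)) (MK K)) := by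
    filter_upwards [hball] with K hKm
    exact hRingInv K (hmem K hKm)
  obtain ⟨Df, hP⟩ : ∃ Df, HasFDerivAt (Pval A B Q R γ) Df K₀ :=
    ⟨_, hf.congr_of_eventuallyEq hev⟩
  refine ⟨Df, hP, ?_⟩
  -- symmetry of P₀
  have hM₀symm : (MK K₀)ᵀ = MK K₀ := by
    show (Q + K₀ᵀ * R * K₀)ᵀ = Q + K₀ᵀ * R * K₀
    simp [Matrix.transpose_add, Matrix.transpose_mul, hQ.eq, hR.eq, Matrix.mul_assoc]
  have hsum₀ : Summable (fun k : ℕ => γ ^ k • ((A - B * K₀)ᵀ ^ k * MK K₀ * (A - B * K₀) ^ k)) :=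
    (summable_congr fun k => (hTpow K₀ k (MK K₀))).mp (hMsum K₀ hK₀ball)
  have hP₀symm : (Pval A B Q R γ K₀)ᵀ = Pval A B Q R γ K₀ := by
    obtain ⟨tr, htr⟩ : ∃ tr : Matrix (Fin n) (Fin n) ℝ →L[ℝ] Matrix (Fin n) (Fin n) ℝ,
        ∀ X, tr X = Xᵀ :=
      ⟨LinearMap.toContinuousLinearMap
        { toFun := fun X => Xᵀ
          map_add' := Matrix.transpose_add
          map_smul' := fun c X => Matrix.transpose_smul c X }, fun _ => rfl⟩
    have hPdef : Pval A B Q R γ K₀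
        = ∑' k : ℕ, γ ^ k • ((A - B * K₀)ᵀ ^ k * MK K₀ * (A - B * K₀) ^ k) := rfl
    rw [hPdef, ← htr, ContinuousLinearMap.map_tsum tr hsum₀]
    apply tsum_congr
    intro k
    rw [htr]
    simp only [Matrix.transpose_smul, Matrix.transpose_mul, Matrix.transpose_pow,
      Matrix.transpose_transpose, hM₀symm, Matrix.mul_assoc]
  -- differentiate the fixed point identity
  have hF₂ := hM.add (hT.clm_apply hP)
  have hev2 : Pval A B Q R γ =ᶠ[nhds K₀]
      fun K => MK K + (Tm K) (Pval A B Q R γ K) := by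
    filter_upwards [hball] with K hKm
    exact hFix K (hmem K hKm)
  have hP2 := hF₂.congr_of_eventuallyEq hev2
  have hDeq := hP.unique hP2
  intro H
  have hDH : Df H = μ' H + ((Tm K₀) (Df H) + (τ' H) (Pval A B Q R γ K₀)) := by
    conv_lhs => rw [hDeq]
    rfl
  have hTmDf : (Tm K₀) (Df H) = γ • (Lᵀ * Df H * L) := rfl
  have hτ'H : (τ' H) (Pval A B Q R γ K₀) = (-γ) • ((B * H)ᵀ * Pval A B Q R γ K₀ * L
      + Lᵀ * Pval A B Q R γ K₀ * (B * H)) := by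
    rw [hτ' H]
    simp [ContinuousLinearMap.add_apply, ContinuousLinearMap.smul_apply,
      Stmt11Aux.sand_apply]
  have hmaineq : Df H - γ • (Lᵀ * Df H * L)
      = Hᵀ * (R * K₀ - γ • (Bᵀ * Pval A B Q R γ K₀ * L))
        + (R * K₀ - γ • (Bᵀ * Pval A B Q R γ K₀ * L))ᵀ * H := by
    have key : Df H - γ • (Lᵀ * Df H * L) = μ' H + (τ' H) (Pval A B Q R γ K₀) := by
      nth_rewrite 1 [hDH]
      rw [← hTmDf]
      abel
    rw [key, hμ' H, hτ'H]
    simp only [Matrix.transpose_sub, Matrix.transpose_mul, Matrix.transpose_smul,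
      Matrix.mul_sub, Matrix.sub_mul, Matrix.smul_mul, Matrix.mul_smul, hR.eq, hP₀symm,
      Matrix.transpose_transpose, Matrix.mul_assoc, smul_add, neg_smul]
    abel
  refine ⟨hmaineq, ?_⟩
  intro X hX
  have h3 := hX.trans hmaineq.symm
  have hY : X - Df H = γ • (Lᵀ * (X - Df H) * L) := by
    have h4 : Lᵀ * (X - Df H) * L = Lᵀ * X * L - Lᵀ * Df H * L := by
      rw [Matrix.mul_sub Lᵀ X (Df H), Matrix.sub_mul (Lᵀ * X) (Lᵀ * Df H) L]
    rw [h4, smul_sub]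
    exact sub_eq_sub_iff_sub_eq_sub.mp h3
  have hfix1 : (Tm K₀) (X - Df H) = X - Df H := by
    have h5 : (Tm K₀) (X - Df H) = γ • (Lᵀ * (X - Df H) * L) := rfl
    rw [h5, ← hY]
  have hYk : ∀ k : ℕ, X - Df H = ((Tm K₀) ^ k) (X - Df H) := by
    intro k
    induction k with
    | zero => simp
    | succ k ih =>
      rw [pow_succ, ContinuousLinearMap.mul_apply, hfix1]
      exact ih
  have hbound : ∀ k : ℕ, ‖X - Df H‖ ≤ (n:ℝ) ^ 2 * (2 * C₀) ^ 2 * (s ^ 2) ^ k * ‖X - Df H‖ := by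
    intro k
    conv_lhs => rw [hYk k]
    calc ‖((Tm K₀) ^ k) (X - Df H)‖ ≤ ‖(Tm K₀) ^ k‖ * ‖X - Df H‖ :=
        ContinuousLinearMap.le_opNorm _ _
      _ ≤ (n:ℝ) ^ 2 * (2 * C₀) ^ 2 * (s ^ 2) ^ k * ‖X - Df H‖ :=
        mul_le_mul_of_nonneg_right (hTnorm K₀ hK₀ball k) (norm_nonneg _)
  have htend : Filter.Tendsto (fun k : ℕ => (n:ℝ) ^ 2 * (2 * C₀) ^ 2 * (s ^ 2) ^ k * ‖X - Df H‖)
      Filter.atTop (nhds 0) := by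
    have h0 := tendsto_pow_atTop_nhds_zero_of_lt_one (by positivity : (0:ℝ) ≤ s ^ 2) hs2
    have h1 := (h0.const_mul ((n:ℝ) ^ 2 * (2 * C₀) ^ 2)).mul_const ‖X - Df H‖
    simpa using h1
  have hle : ‖X - Df H‖ ≤ 0 := ge_of_tendsto htend (Filter.Eventually.of_forall hbound)
  have hzero : X - Df H = 0 := by
    rw [← norm_le_zero_iff]
    exact hle
  exact sub_eq_zero.mp hzero
end

section
/- Fix reals a, b, Q, R, σ₀, σ and γ ∈ (0,1), and set c := σ₀² + γσ²/(1−γ). For θ ∈ ℝ write A_θ := a − bθ, and for θ with γ·A_θ² < 1 define P(θ) := (Q + Rθ²)/(1 − γ A_θ²), Σ(θ) := c/(1 − γ A_θ²), and J(θ) := c·P(θ). Then at every θ with γ·A_θ² < 1 the performance function J is differentiable with J'(θ) = 2·Σ(θ)·(Rθ − γ·b·P(θ)·A_θ). -/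
/-- Scalar discounted LQR: with `c = σ₀² + γσ²/(1−γ)`, `A_θ = a − bθ`,
`P(θ) = (Q + Rθ²)/(1 − γA_θ²)`, `Σ(θ) = c/(1 − γA_θ²)`, `J(θ) = c·P(θ)`, the performance
function `J` is differentiable at every `γ`-stabilizing `θ` with
`J'(θ) = 2·Σ(θ)·(Rθ − γ·b·P(θ)·A_θ)`. -/
theorem stmt13 (a b Q R σ₀ σ γ : ℝ) (hγ : γ ∈ Set.Ioo (0 : ℝ) 1) (θ : ℝ)
    (hθ : γ * (a - b * θ) ^ 2 < 1) :
    HasDerivAt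
      (fun t : ℝ => (σ₀ ^ 2 + γ * σ ^ 2 / (1 - γ)) *
        ((Q + R * t ^ 2) / (1 - γ * (a - b * t) ^ 2)))
      (2 * ((σ₀ ^ 2 + γ * σ ^ 2 / (1 - γ)) / (1 - γ * (a - b * θ) ^ 2)) *
        (R * θ - γ * b * ((Q + R * θ ^ 2) / (1 - γ * (a - b * θ) ^ 2)) * (a - b * θ)))
      θ := by
  have hD0 : (1 - γ * (a - b * θ) ^ 2) ≠ 0 := by nlinarith [hθ]
  have hN : HasDerivAt (fun t : ℝ => Q + R * t ^ 2) (2 * R * θ) θ := by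
    have := ((hasDerivAt_pow 2 θ).const_mul R).const_add Q
    simpa [mul_comm, mul_assoc, mul_left_comm] using this
  have hA : HasDerivAt (fun t : ℝ => a - b * t) (-b) θ := by
    simpa using ((hasDerivAt_id θ).const_mul b).const_sub a
  have hD : HasDerivAt (fun t : ℝ => 1 - γ * (a - b * t) ^ 2)
      (2 * γ * b * (a - b * θ)) θ := by
    have := (((hA.pow 2)).const_mul γ).const_sub 1
    refine this.congr_deriv ?_
    ring
  have := ((hN.div hD hD0).const_mul (σ₀ ^ 2 + γ * σ ^ 2 / (1 - γ)))
  refine this.congr_deriv ?_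
  generalize 1 - γ * (a - b * θ) ^ 2 = D at hD0 ⊢
  field_simp
end

section
/- Fix reals a, b, Q, R, σ₀, σ and γ ∈ (0,1), and set c := σ₀² + γσ²/(1−γ). For θ ∈ ℝ write A_θ := a − bθ, and for θ with γ·A_θ² < 1 define P(θ) := (Q + Rθ²)/(1 − γ A_θ²), Σ(θ) := c/(1 − γ A_θ²), J(θ) := c·P(θ), the Gauss–Newton curvature H(θ) := 2·Σ(θ)·(R + γ·b²·P(θ)), and the distributional term Λ(θ) := −4·Σ(θ)·A_θ·b·P'(θ). Then at every θ with γ·A_θ² < 1 the function J is twice differentiable and the exact Hessian decomposes as J''(θ) = H(θ) + γ·Λ(θ). -/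
/-- Scalar discounted-LQR value coefficient `P(θ) = (Q + Rθ²)/(1 − γ(a − bθ)²)`. -/
noncomputable def Pscalar (a b Q R γ t : ℝ) : ℝ :=
  (Q + R * t ^ 2) / (1 - γ * (a - b * t) ^ 2)

lemma hasDerivAt_A (a b : ℝ) (t : ℝ) :
    HasDerivAt (fun t : ℝ => a - b * t) (-b) t := by
  simpa using ((hasDerivAt_id t).const_mul b).const_sub a

lemma hasDerivAt_D (a b γ : ℝ) (t : ℝ) :
    HasDerivAt (fun t : ℝ => 1 - γ * (a - b * t) ^ 2) (2 * γ * b * (a - b * t)) t := by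
  have h := (((hasDerivAt_A a b t).pow 2).const_mul γ).const_sub 1
  refine h.congr_deriv (Eq.symm ?_); ring

lemma hasDerivAt_N (Q R : ℝ) (t : ℝ) :
    HasDerivAt (fun t : ℝ => Q + R * t ^ 2) (2 * R * t) t := by
  have h := ((hasDerivAt_pow 2 t).const_mul R).const_add Q
  refine h.congr_deriv (Eq.symm ?_); push_cast; ring

lemma hasDerivAt_P (a b Q R γ : ℝ) (t : ℝ) (ht : 1 - γ * (a - b * t) ^ 2 ≠ 0) :
    HasDerivAt (Pscalar a b Q R γ)
      ((2 * R * t * (1 - γ * (a - b * t) ^ 2) -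
        (Q + R * t ^ 2) * (2 * γ * b * (a - b * t))) / (1 - γ * (a - b * t) ^ 2) ^ 2) t := by
  exact (hasDerivAt_N Q R t).div (hasDerivAt_D a b γ t) ht

lemma deriv_P (a b Q R γ : ℝ) (t : ℝ) (ht : 1 - γ * (a - b * t) ^ 2 ≠ 0) :
    deriv (Pscalar a b Q R γ) t =
      (2 * R * t * (1 - γ * (a - b * t) ^ 2) -
        (Q + R * t ^ 2) * (2 * γ * b * (a - b * t))) / (1 - γ * (a - b * t) ^ 2) ^ 2 :=
  (hasDerivAt_P a b Q R γ t ht).deriv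

/-- Scalar discounted LQR: with `c = σ₀² + γσ²/(1−γ)`, `A_θ = a − bθ`,
`P(θ) = (Q + Rθ²)/(1 − γA_θ²)`, `Σ(θ) = c/(1 − γA_θ²)`, `J(θ) = c·P(θ)`,
Gauss–Newton curvature `H(θ) = 2Σ(θ)(R + γb²P(θ))`, and distributional term
`Λ(θ) = −4Σ(θ)·A_θ·b·P'(θ)`, at every `γ`-stabilizing `θ` the function `J` is twice
differentiable and `J''(θ) = H(θ) + γ·Λ(θ)`. -/
theorem stmt14 (a b Q R σ₀ σ γ : ℝ) (hγ : γ ∈ Set.Ioo (0 : ℝ) 1) (θ : ℝ)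
    (hθ : γ * (a - b * θ) ^ 2 < 1) :
    HasDerivAt
      (deriv (fun t : ℝ => (σ₀ ^ 2 + γ * σ ^ 2 / (1 - γ)) * Pscalar a b Q R γ t))
      (2 * ((σ₀ ^ 2 + γ * σ ^ 2 / (1 - γ)) / (1 - γ * (a - b * θ) ^ 2)) *
          (R + γ * b ^ 2 * Pscalar a b Q R γ θ)
        + γ * (-4 * ((σ₀ ^ 2 + γ * σ ^ 2 / (1 - γ)) / (1 - γ * (a - b * θ) ^ 2)) *
            (a - b * θ) * b * deriv (Pscalar a b Q R γ) θ))
      θ := by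
  set c : ℝ := σ₀ ^ 2 + γ * σ ^ 2 / (1 - γ) with hc
  have hDθ : 1 - γ * (a - b * θ) ^ 2 ≠ 0 := ne_of_gt (by linarith)
  -- the explicit first derivative of `J` on the stabilizing set
  set g : ℝ → ℝ := fun t => c *
      ((2 * R * t * (1 - γ * (a - b * t) ^ 2) -
        (Q + R * t ^ 2) * (2 * γ * b * (a - b * t))) / (1 - γ * (a - b * t) ^ 2) ^ 2) with hg
  have hU : IsOpen {t : ℝ | γ * (a - b * t) ^ 2 < 1} := by
    apply isOpen_lt _ continuous_const
    continuity
  have hev : deriv (fun t : ℝ => c * Pscalar a b Q R γ t) =ᶠ[nhds θ] g := by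
    filter_upwards [hU.mem_nhds hθ] with t ht
    have hDt : 1 - γ * (a - b * t) ^ 2 ≠ 0 := ne_of_gt (by simpa using sub_pos.mpr ht)
    have hP := hasDerivAt_P a b Q R γ t hDt
    rw [hg]
    rw [deriv_const_mul _ hP.differentiableAt, hP.deriv]
  -- derivative of g at θ
  have hA := hasDerivAt_A a b θ
  have hD := hasDerivAt_D a b γ θ
  have hN := hasDerivAt_N Q R θ
  have h1 : HasDerivAt (fun t : ℝ => 2 * R * t) (2 * R) θ := by
    simpa using (hasDerivAt_id θ).const_mul (2 * R)
  have h2 : HasDerivAt (fun t : ℝ => 2 * γ * b * (a - b * t)) (2 * γ * b * (-b)) θ :=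
    hA.const_mul (2 * γ * b)
  have hn := (h1.mul hD).sub (hN.mul h2)
  have hd := hD.pow 2
  have hdne : (1 - γ * (a - b * θ) ^ 2) ^ 2 ≠ 0 := pow_ne_zero 2 hDθ
  have hgder := ((hn.div hd hdne)).const_mul c
  have hgd : HasDerivAt g _ θ := hgder
  have := hgd.congr_of_eventuallyEq hev
  refine this.congr_deriv (Eq.symm ?_)
  simp only [Pi.pow_apply, Pi.mul_apply, Pi.sub_apply, Pi.div_apply]
  rw [deriv_P a b Q R γ θ hDθ, Pscalar]
  field_simp
  ring
end
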